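/- arXiv:1505.01312 — 5 statements merged into one kernel-verified Lean document; each statement's English description precedes it below -/
import Mathlib

section
/- Existence criterion for the weighted Moore–Penrose inverse: Let X and Y be complex Banach spaces, let T ∈ L(X,Y), and let E ∈ L(Y) and F ∈ L(X) be invertible positive operators. Then T has a weighted Moore–Penrose inverse T^†_{E,F} if and only if there exist idempotent operators P ∈ L(Y) and Q ∈ L(X) such that P ∈ H(L(Y)^E), Q ∈ H(L(X)^F), R(P) = R(T) and N(Q) = N(T). -/
/-!
Common definitions: hermitian and positive elements of a complex unital Banach
algebra, hermitian elements with respect to the equivalent norm induced by an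
invertible positive element (weight), and the weighted Moore–Penrose inverse,
both for Banach algebra elements and for bounded linear operators between
Banach spaces.
-/

noncomputable section

/-- An element `a` of a complex unital Banach algebra is hermitian if
`‖exp(i t a)‖ = 1` for all real `t`. -/
def IsHermitianEl {A : Type*} [NormedRing A] [NormedAlgebra ℂ A] (a : A) : Prop :=
  ∀ t : ℝ, ‖NormedSpace.exp ((Complex.I * (t : ℂ)) • a)‖ = 1

/-- An element of a complex unital Banach algebra is positive if it is hermitian
and its spectrum is contained in `[0, ∞)`. -/
def IsPositiveEl {A : Type*} [NormedRing A] [NormedAlgebra ℂ A] (a : A) : Prop :=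
  IsHermitianEl a ∧ spectrum ℂ a ⊆ Complex.ofReal '' Set.Ici (0 : ℝ)

/-- `a` is hermitian in `A^u`, i.e. hermitian for the equivalent norm
`‖x‖_u = ‖u^{1/2} x u^{-1/2}‖`, where `u^{1/2}` is the (unique) invertible
positive square root of the invertible positive weight `u`. -/
def IsHermitianWt {A : Type*} [NormedRing A] [NormedAlgebra ℂ A] (u a : A) : Prop :=
  ∃ s : Aˣ, IsPositiveEl (s : A) ∧ ((s : A)) ^ 2 = u ∧
    ∀ t : ℝ, ‖(s : A) * NormedSpace.exp ((Complex.I * (t : ℂ)) • a) * ((s⁻¹ : Aˣ) : A)‖ = 1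

/-- `b` is the weighted Moore–Penrose inverse of `a` with weights `e` and `f`. -/
def IsWMPI {A : Type*} [NormedRing A] [NormedAlgebra ℂ A] (e f a b : A) : Prop :=
  a * b * a = a ∧ b * a * b = b ∧ IsHermitianWt e (a * b) ∧ IsHermitianWt f (b * a)

/-- `a` is weighted EP with weights `e` and `f`. -/
def IsWEP {A : Type*} [NormedRing A] [NormedAlgebra ℂ A] (e f a : A) : Prop :=
  ∃ b : A, IsWMPI e f a b ∧ a * b = b * a

/-- `S ∈ L(Y,X)` is the weighted Moore–Penrose inverse of `T ∈ L(X,Y)` with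
weights `E ∈ L(Y)` and `F ∈ L(X)`. -/
def IsWMPIop {X Y : Type*} [NormedAddCommGroup X] [NormedSpace ℂ X]
    [NormedAddCommGroup Y] [NormedSpace ℂ Y]
    (E : Y →L[ℂ] Y) (F : X →L[ℂ] X) (T : X →L[ℂ] Y) (S : Y →L[ℂ] X) : Prop :=
  (T.comp S).comp T = T ∧ (S.comp T).comp S = S ∧
    IsHermitianWt E (T.comp S) ∧ IsHermitianWt F (S.comp T)

/-- `T ∈ L(X)` is weighted EP with weights `E` and `F`. -/
def IsWEPop {X : Type*} [NormedAddCommGroup X] [NormedSpace ℂ X]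
    (E F T : X →L[ℂ] X) : Prop :=
  ∃ S : X →L[ℂ] X, IsWMPIop E F T S ∧ T.comp S = S.comp T


/-- **Existence criterion for the weighted Moore–Penrose inverse.**
`T` has a weighted Moore–Penrose inverse `T^†_{E,F}` iff there exist
idempotents `P ∈ H(L(Y)^E)` and `Q ∈ H(L(X)^F)` with `R(P) = R(T)` and
`N(Q) = N(T)`. -/
theorem weighted_MP_inverse_exists_iff
    {X Y : Type*} [NormedAddCommGroup X] [NormedSpace ℂ X] [CompleteSpace X]
    [NormedAddCommGroup Y] [NormedSpace ℂ Y] [CompleteSpace Y]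
    (E : Y →L[ℂ] Y) (F : X →L[ℂ] X)
    (hE : IsPositiveEl E ∧ IsUnit E) (hF : IsPositiveEl F ∧ IsUnit F)
    (T : X →L[ℂ] Y) :
    (∃ S : Y →L[ℂ] X, IsWMPIop E F T S) ↔
      ∃ (P : Y →L[ℂ] Y) (Q : X →L[ℂ] X),
        P.comp P = P ∧ Q.comp Q = Q ∧ IsHermitianWt E P ∧ IsHermitianWt F Q ∧
        Set.range ⇑P = Set.range ⇑T ∧ LinearMap.ker (Q : X →ₗ[ℂ] X) = LinearMap.ker (T : X →ₗ[ℂ] Y) := by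
  constructor
  · rintro ⟨S, h1, h2, h3, h4⟩
    have h1' : ∀ x, T (S (T x)) = T x := fun x => congrArg (fun f : X →L[ℂ] Y => f x) h1
    have h2' : ∀ y, S (T (S y)) = S y := fun y => congrArg (fun f : Y →L[ℂ] X => f y) h2
    refine ⟨T.comp S, S.comp T, ?_, ?_, h3, h4, ?_, ?_⟩
    · ext y
      exact h1' (S y)
    · ext x
      exact h2' (T x)
    · apply Set.eq_of_subset_of_subset
      · rintro y ⟨z, rfl⟩
        exact ⟨S z, rfl⟩
      · rintro y ⟨x, rfl⟩
        exact ⟨T x, h1' x⟩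
    · ext x
      simp only [LinearMap.mem_ker, ContinuousLinearMap.coe_coe, ContinuousLinearMap.coe_comp', Function.comp_apply]
      constructor
      · intro h
        rw [← h1' x, h, map_zero]
      · intro h
        rw [h, map_zero]
  · rintro ⟨P, Q, hPP, hQQ, hPE, hQF, hPr, hQk⟩
    have hPP' : ∀ y, P (P y) = P y := fun y => congrArg (fun f : Y →L[ℂ] Y => f y) hPP
    have hQQ' : ∀ x, Q (Q x) = Q x := fun x => congrArg (fun f : X →L[ℂ] X => f x) hQQ
    have hPfix : ∀ y ∈ Set.range ⇑T, P y = y := by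
      intro y hy
      rw [← hPr] at hy
      obtain ⟨z, rfl⟩ := hy
      exact hPP' z
    have hQfix : ∀ x ∈ Set.range ⇑Q, Q x = x := by
      rintro x ⟨z, rfl⟩
      exact hQQ' z
    have hTQ : ∀ x, T (Q x) = T x := by
      intro x
      have hq : Q (x - Q x) = 0 := by
        rw [map_sub, hQQ' x, sub_self]
      have h2 : (x - Q x) ∈ LinearMap.ker (T : X →ₗ[ℂ] Y) := hQk ▸ LinearMap.mem_ker.mpr hq
      have h3 : T x - T (Q x) = 0 := by
        have := LinearMap.mem_ker.mp h2
        rwa [map_sub] at this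
      exact (sub_eq_zero.mp h3).symm
    set K : Submodule ℂ X := LinearMap.range (Q : X →ₗ[ℂ] X) with hK
    set M : Submodule ℂ Y := LinearMap.range (T : X →ₗ[ℂ] Y) with hM
    have hKker : K = LinearMap.ker ((ContinuousLinearMap.id ℂ X - Q : X →L[ℂ] X) : X →ₗ[ℂ] X) := by
      ext x
      simp only [hK, LinearMap.mem_range, LinearMap.mem_ker, ContinuousLinearMap.coe_coe, ContinuousLinearMap.sub_apply,
        ContinuousLinearMap.id_apply, sub_eq_zero]
      constructor
      · rintro ⟨z, rfl⟩
        exact (hQQ' z).symm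
      · intro h
        exact ⟨x, h.symm⟩
    have hKc : IsClosed (K : Set X) := by
      rw [hKker]
      exact ContinuousLinearMap.isClosed_ker _
    have hMker : M = LinearMap.ker ((ContinuousLinearMap.id ℂ Y - P : Y →L[ℂ] Y) : Y →ₗ[ℂ] Y) := by
      ext y
      simp only [hM, LinearMap.mem_range, LinearMap.mem_ker, ContinuousLinearMap.coe_coe, ContinuousLinearMap.sub_apply,
        ContinuousLinearMap.id_apply, sub_eq_zero]
      constructor
      · rintro ⟨z, rfl⟩
        exact (hPfix (T z) ⟨z, rfl⟩).symm
      · intro h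
        have : y ∈ Set.range ⇑P := ⟨y, h.symm⟩
        rw [hPr] at this
        exact this
    have hMc : IsClosed (M : Set Y) := by
      rw [hMker]
      exact ContinuousLinearMap.isClosed_ker _
    haveI : CompleteSpace K := hKc.completeSpace_coe
    haveI : CompleteSpace M := hMc.completeSpace_coe
    set T' : K →L[ℂ] M :=
      (T.comp K.subtypeL).codRestrict M (fun x => LinearMap.mem_range.mpr ⟨x.1, rfl⟩) with hT'def
    have hinj : LinearMap.ker (T' : K →ₗ[ℂ] M) = ⊥ := by
      rw [eq_bot_iff]
      rintro ⟨x, hx⟩ hker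
      have hTx : T x = 0 := congrArg Subtype.val (LinearMap.mem_ker.mp hker)
      have hQx : Q x = 0 := LinearMap.mem_ker.mp (hQk.symm ▸ LinearMap.mem_ker.mpr hTx)
      have hxQ : Q x = x := by
        obtain ⟨z, hz⟩ := LinearMap.mem_range.mp hx
        exact hQfix x ⟨z, hz⟩
      have : x = 0 := by rw [← hxQ, hQx]
      exact (Submodule.mem_bot ℂ).mpr (Subtype.ext this)
    have hsurj : LinearMap.range (T' : K →ₗ[ℂ] M) = ⊤ := by
      rw [eq_top_iff]
      rintro ⟨y, hy⟩ -
      rcases LinearMap.mem_range.mp hy with ⟨z, rfl⟩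
      refine LinearMap.mem_range.mpr ⟨⟨Q z, LinearMap.mem_range.mpr ⟨z, rfl⟩⟩, ?_⟩
      exact Subtype.ext (hTQ z)
    set e : K ≃L[ℂ] M := ContinuousLinearEquiv.ofBijective T' hinj hsurj with hedef
    have hecoe : ⇑e = ⇑T' := ContinuousLinearEquiv.coeFn_ofBijective T' hinj hsurj
    set P' : Y →L[ℂ] M := P.codRestrict M (fun y => by
      have hmem : P y ∈ Set.range ⇑T := hPr ▸ Set.mem_range_self y
      obtain ⟨x, hx⟩ := hmem
      exact LinearMap.mem_range.mpr ⟨x, hx⟩) with hP'def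
    set S : Y →L[ℂ] X := K.subtypeL.comp ((e.symm : M →L[ℂ] K).comp P') with hSdef
    have hTSapp : ∀ y, T (S y) = P y := by
      intro y
      have h1 : T' (e.symm (P' y)) = P' y := by
        have := e.apply_symm_apply (P' y)
        rwa [hecoe] at this
      exact congrArg Subtype.val h1
    have hSTapp : ∀ x, S (T x) = Q x := by
      intro x
      have hmem : T x ∈ M := LinearMap.mem_range.mpr ⟨x, rfl⟩
      have hP' : P' (T x) = ⟨T x, hmem⟩ := Subtype.ext (hPfix (T x) ⟨x, rfl⟩)
      have hQmem : Q x ∈ K := LinearMap.mem_range.mpr ⟨x, rfl⟩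
      have hT' : T' ⟨Q x, hQmem⟩ = ⟨T x, hmem⟩ := Subtype.ext (hTQ x)
      have h2 : e.symm ⟨T x, hmem⟩ = ⟨Q x, hQmem⟩ := by
        rw [← hT']
        exact ContinuousLinearEquiv.ofBijective_symm_apply_apply T' hinj hsurj _
      show ((e.symm (P' (T x)) : K) : X) = Q x
      rw [hP', h2]
    have hTS : T.comp S = P := ContinuousLinearMap.ext hTSapp
    have hST : S.comp T = Q := ContinuousLinearMap.ext hSTapp
    refine ⟨S, ?_, ?_, ?_, ?_⟩
    · rw [hTS]
      ext x
      exact hPfix (T x) ⟨x, rfl⟩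
    · rw [hST]
      ext y
      show Q (S y) = S y
      have : S y ∈ K := (e.symm (P' y)).2
      obtain ⟨z, hz⟩ := LinearMap.mem_range.mp this
      exact hQfix (S y) ⟨z, hz⟩
    · rw [hTS]; exact hPE
    · rw [hST]; exact hQF
end
end

section
/- Reverse order law for the factorization T = BC: Let X and Y be complex Banach spaces, let E, H ∈ L(X) and F ∈ L(Y) be invertible positive operators, let T ∈ L(X) be such that T^†_{E,H} exists, and suppose there exist a surjective C ∈ L(X,Y) and an injective B ∈ L(Y,X) with T = B C (so that B^†_{E,F} and C^†_{F,H} exist). Then T^†_{E,H} = C^†_{F,H} B^†_{E,F}, T T^†_{E,H} = B B^†_{E,F}, T^†_{E,H} T = C^†_{F,H} C, B^†_{E,F} = C T^†_{E,H}, C^†_{F,H} = T^†_{E,H} B, T C^†_{F,H} = B and B^†_{E,F} T = C. -/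
/-!
Common definitions: hermitian and positive elements of a complex unital Banach
algebra, hermitian elements with respect to the equivalent norm induced by an
invertible positive element (weight), and the weighted Moore–Penrose inverse,
both for Banach algebra elements and for bounded linear operators between
Banach spaces.
-/

noncomputable section

section AuxiliaryLemmas

open Filter ENNReal NNReal Pointwise NormedSpace

variable {A : Type*} [NormedRing A] [NormedAlgebra ℂ A] [CompleteSpace A]

/-- If the spectral radius is `< c` then eventually `‖a ^ n‖₊ < c ^ n`. -/
lemma eventually_nnnorm_pow_lt {a : A} {c : ℝ≥0}
    (hc : spectralRadius ℂ a < (c : ℝ≥0∞)) :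
    ∀ᶠ n : ℕ in atTop, (‖a ^ n‖₊ : ℝ≥0∞) < (c : ℝ≥0∞) ^ n := by
  have ht := spectrum.pow_nnnorm_pow_one_div_tendsto_nhds_spectralRadius a
  have hev : ∀ᶠ n : ℕ in atTop, (‖a ^ n‖₊ : ℝ≥0∞) ^ (1 / (n : ℝ)) < (c : ℝ≥0∞) :=
    ht.eventually (Filter.Tendsto.eventually_lt_const hc tendsto_id) |>.mono (fun n hn => hn)
  filter_upwards [hev, eventually_ge_atTop 1] with n hn hn1
  have hn0 : (0 : ℝ) < (n : ℝ) := by exact_mod_cast hn1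
  have h1 : ((‖a ^ n‖₊ : ℝ≥0∞) ^ (1 / (n : ℝ))) ^ (n : ℝ) < (c : ℝ≥0∞) ^ (n : ℝ) :=
    ENNReal.rpow_lt_rpow hn hn0
  rw [← ENNReal.rpow_mul, one_div, inv_mul_cancel₀ hn0.ne', ENNReal.rpow_one] at h1
  calc (‖a ^ n‖₊ : ℝ≥0∞) < (c : ℝ≥0∞) ^ (n : ℝ) := h1
    _ = (c : ℝ≥0∞) ^ (n : ℕ) := by rw [ENNReal.rpow_natCast]

/-- Uniqueness of the invertible square root with spectrum in `[0, ∞)`. -/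
lemma sqrt_unique {s r : Aˣ}
    (hs : spectrum ℂ (s : A) ⊆ Complex.ofReal '' Set.Ici (0:ℝ))
    (hr : spectrum ℂ (r : A) ⊆ Complex.ofReal '' Set.Ici (0:ℝ))
    (h2 : (s : A) ^ 2 = (r : A) ^ 2) : (s : A) = (r : A) := by
  -- a uniform positive lower bound on the spectra
  have lower : ∀ a : Aˣ, ∃ m : ℝ, 0 < m ∧ ∀ z ∈ spectrum ℂ (a : A), m ≤ ‖z‖ := by
    intro a
    have hopen : IsOpen (spectrum ℂ (a : A))ᶜ := (spectrum.isClosed (a : A)).isOpen_compl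
    have h0 : (0 : ℂ) ∈ (spectrum ℂ (a : A))ᶜ := spectrum.zero_notMem ℂ a.isUnit
    obtain ⟨ε, hε, hball⟩ := Metric.isOpen_iff.mp hopen 0 h0
    refine ⟨ε, hε, fun z hz => ?_⟩
    by_contra hlt
    push_neg at hlt
    exact hball (by simpa [Metric.mem_ball, dist_zero_right] using hlt) hz
  obtain ⟨m₁, hm₁, hb₁⟩ := lower s
  obtain ⟨m₂, hm₂, hb₂⟩ := lower r
  set m : ℝ := min m₁ m₂ with hmdef
  have hm : 0 < m := lt_min hm₁ hm₂
  set M : ℝ := ‖(s : A)‖ * ‖(1 : A)‖ + ‖(r : A)‖ * ‖(1 : A)‖ + m + 1 with hMdef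
  have hss : (0:ℝ) ≤ ‖(s : A)‖ * ‖(1 : A)‖ := mul_nonneg (norm_nonneg _) (norm_nonneg _)
  have hrr : (0:ℝ) ≤ ‖(r : A)‖ * ‖(1 : A)‖ := mul_nonneg (norm_nonneg _) (norm_nonneg _)
  have hMpos : 0 < M := by nlinarith
  have hmM : m < M := by nlinarith
  have hcM0 : ((M : ℂ)) ≠ 0 := by
    simp only [ne_eq, Complex.ofReal_eq_zero]
    exact hMpos.ne'
  set cM : ℂ := ((M : ℝ) : ℂ)⁻¹ with hcMdef
  have hcMne : cM ≠ 0 := inv_ne_zero hcM0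
  set cMu : ℂˣ := Units.mk0 cM hcMne with hcMudef
  -- the two operators
  set P : A := 1 - cM • (s : A) with hPdef
  set Q : A := 1 + cM • (r : A) with hQdef
  -- spectrum of P
  have hσP : spectrum ℂ P = {(1 : ℂ)} - cMu • spectrum ℂ (s : A) := by
    have hPe : P = algebraMap ℂ A 1 - cMu • (s : A) := by
      rw [hPdef, map_one, Units.smul_def]
      rfl
    rw [hPe, ← spectrum.singleton_sub_eq, spectrum.unit_smul_eq_smul]
  -- norm bound on the spectrum of P
  have hPbound : ∀ z ∈ spectrum ℂ P, ‖z‖ ≤ 1 - m / M := by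
    intro z hz
    rw [hσP] at hz
    rw [Set.mem_sub] at hz
    obtain ⟨o, ho, v, hv, hzv⟩ := hz
    rw [Set.mem_singleton_iff] at ho
    subst ho
    rw [Set.mem_smul_set] at hv
    obtain ⟨w, hw, rfl⟩ := hv
    obtain ⟨xr, hxr0, hxw⟩ := hs hw
    have hxle : xr ≤ ‖(s : A)‖ * ‖(1 : A)‖ := by
      have := spectrum.norm_le_norm_mul_of_mem hw
      rwa [← hxw, Complex.norm_real, Real.norm_of_nonneg hxr0] at this
    have hxge : m ≤ xr := by
      have := hb₁ w hw
      rw [← hxw, Complex.norm_real, Real.norm_of_nonneg hxr0] at this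
      exact le_trans (min_le_left _ _) this
    have hzval : z = (((1 : ℝ) - xr / M : ℝ) : ℂ) := by
      rw [← hzv, Units.smul_def, hcMudef, Units.val_mk0, hcMdef, ← hxw]
      push_cast
      simp only [smul_eq_mul]
      field_simp
    have hx1 : xr / M ≤ 1 := by
      rw [div_le_one hMpos]
      nlinarith
    rw [hzval, Complex.norm_real, Real.norm_of_nonneg (by linarith)]
    have hdiv : m / M ≤ xr / M := (div_le_div_iff_of_pos_right hMpos).mpr hxge
    linarith
  -- spectrum of Q
  have hσQ : spectrum ℂ Q = {(1 : ℂ)} + cMu • spectrum ℂ (r : A) := by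
    have hQe : Q = algebraMap ℂ A 1 + cMu • (r : A) := by
      rw [hQdef, map_one, Units.smul_def]
      rfl
    rw [hQe, ← spectrum.singleton_add_eq, spectrum.unit_smul_eq_smul]
  -- description of elements in the spectrum of Q
  have hQmem : ∀ z ∈ spectrum ℂ Q, ∃ xr : ℝ, m ≤ xr ∧ z = (((1 : ℝ) + xr / M : ℝ) : ℂ) := by
    intro z hz
    rw [hσQ, Set.mem_add] at hz
    obtain ⟨o, ho, v, hv, hzv⟩ := hz
    rw [Set.mem_singleton_iff] at ho
    subst ho
    rw [Set.mem_smul_set] at hv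
    obtain ⟨w, hw, rfl⟩ := hv
    obtain ⟨xr, hxr0, hxw⟩ := hr hw
    refine ⟨xr, ?_, ?_⟩
    · have := hb₂ w hw
      rw [← hxw, Complex.norm_real, Real.norm_of_nonneg hxr0] at this
      exact le_trans (min_le_right _ _) this
    · rw [← hzv, Units.smul_def, hcMudef, Units.val_mk0, hcMdef, ← hxw]
      push_cast
      simp only [smul_eq_mul]
      field_simp
  -- Q is invertible
  have hQunit : IsUnit Q := by
    apply spectrum.isUnit_of_zero_notMem ℂ
    intro h0
    obtain ⟨xr, hxr, hx0⟩ := hQmem 0 h0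
    have : (1 : ℝ) + xr / M = 0 := by
      have := congrArg Complex.re hx0
      simpa using this.symm
    have hxpos : 0 < xr / M := div_pos (lt_of_lt_of_le hm hxr) hMpos
    linarith
  set QU : Aˣ := hQunit.unit with hQUdef
  have hQU : (QU : A) = Q := hQunit.unit_spec
  set Qi : A := ((QU⁻¹ : Aˣ) : A) with hQidef
  -- norm bound on the spectrum of Qi
  have hQibound : ∀ z ∈ spectrum ℂ Qi, ‖z‖ ≤ (1 + m / M)⁻¹ := by
    intro z hz
    have hz0 : z ≠ 0 := by
      intro h0
      subst h0
      exact spectrum.zero_notMem ℂ (QU⁻¹).isUnit hz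
    set zU : ℂˣ := Units.mk0 z hz0 with hzUdef
    have hzinv : (z⁻¹ : ℂ) ∈ spectrum ℂ Q := by
      have : ((zU : ℂ)) ∈ spectrum ℂ ((QU⁻¹ : Aˣ) : A) := hz
      rw [spectrum.inv_mem_iff] at this
      rw [inv_inv] at this
      rw [hQU] at this
      exact this
    obtain ⟨xr, hxr, hzval⟩ := hQmem _ hzinv
    have hnorm : ‖(z⁻¹ : ℂ)‖ = 1 + xr / M := by
      rw [hzval, Complex.norm_real, Real.norm_of_nonneg]
      have : 0 < xr / M := div_pos (lt_of_lt_of_le hm hxr) hMpos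
      linarith
    have hge : 1 + m / M ≤ ‖(z⁻¹ : ℂ)‖ := by
      rw [hnorm]
      have : m / M ≤ xr / M := (div_le_div_iff_of_pos_right hMpos).mpr hxr
      linarith
    have h1m : 0 < 1 + m / M := by positivity
    rw [norm_inv] at hge
    calc ‖z‖ = (‖z‖⁻¹)⁻¹ := (inv_inv _).symm
      _ ≤ (1 + m / M)⁻¹ := by
          apply inv_anti₀ h1m hge
  -- spectral radius bounds
  have hmM1 : 0 ≤ 1 - m / M := by
    have : m / M ≤ 1 := by
      rw [div_le_one hMpos]
      linarith
    linarith
  set κ₁ : ℝ≥0 := Real.toNNReal (1 - m / M) with hκ₁def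
  set κ₂ : ℝ≥0 := Real.toNNReal ((1 + m / M)⁻¹) with hκ₂def
  have hmMpos : 0 < m / M := div_pos hm hMpos
  have hκ₁lt : κ₁ < 1 := by
    rw [hκ₁def, ← Real.toNNReal_one]
    rw [Real.toNNReal_lt_toNNReal_iff one_pos]
    linarith
  have hκ₂lt : κ₂ < 1 := by
    rw [hκ₂def, ← Real.toNNReal_one]
    rw [Real.toNNReal_lt_toNNReal_iff one_pos]
    rw [inv_lt_one_iff₀]
    right
    linarith
  have hρP : spectralRadius ℂ P ≤ (κ₁ : ℝ≥0∞) := by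
    refine iSup₂_le fun z hz => ?_
    rw [ENNReal.coe_le_coe, ← NNReal.coe_le_coe, coe_nnnorm, hκ₁def,
      Real.coe_toNNReal _ hmM1]
    exact hPbound z hz
  have hρQi : spectralRadius ℂ Qi ≤ (κ₂ : ℝ≥0∞) := by
    refine iSup₂_le fun z hz => ?_
    rw [ENNReal.coe_le_coe, ← NNReal.coe_le_coe, coe_nnnorm, hκ₂def,
      Real.coe_toNNReal _ (by positivity)]
    exact hQibound z hz
  -- choose strict bounds
  set c₁ : ℝ≥0 := (1 + κ₁) / 2 with hc₁def
  set c₂ : ℝ≥0 := (1 + κ₂) / 2 with hc₂def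
  have hκc₁ : κ₁ < c₁ := by
    rw [hc₁def, ← NNReal.coe_lt_coe]
    push_cast
    rw [← NNReal.coe_lt_coe] at hκ₁lt
    push_cast at hκ₁lt
    linarith
  have hκc₂ : κ₂ < c₂ := by
    rw [hc₂def, ← NNReal.coe_lt_coe]
    push_cast
    rw [← NNReal.coe_lt_coe] at hκ₂lt
    push_cast at hκ₂lt
    linarith
  have hc₁lt : c₁ < 1 := by
    rw [hc₁def, ← NNReal.coe_lt_coe]
    push_cast
    rw [← NNReal.coe_lt_coe] at hκ₁lt
    push_cast at hκ₁lt
    linarith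
  have hc₂lt : c₂ < 1 := by
    rw [hc₂def, ← NNReal.coe_lt_coe]
    push_cast
    rw [← NNReal.coe_lt_coe] at hκ₂lt
    push_cast at hκ₂lt
    linarith
  have hc₁c₂ : c₁ * c₂ < 1 :=
    lt_of_le_of_lt (mul_le_of_le_one_right zero_le hc₂lt.le) hc₁lt
  -- eventual norm bounds
  have hevP : ∀ᶠ n : ℕ in atTop, (‖P ^ n‖₊ : ℝ≥0∞) < (c₁ : ℝ≥0∞) ^ n :=
    eventually_nnnorm_pow_lt (lt_of_le_of_lt hρP (ENNReal.coe_lt_coe.mpr hκc₁))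
  have hevQ : ∀ᶠ n : ℕ in atTop, (‖Qi ^ n‖₊ : ℝ≥0∞) < (c₂ : ℝ≥0∞) ^ n :=
    eventually_nnnorm_pow_lt (lt_of_le_of_lt hρQi (ENNReal.coe_lt_coe.mpr hκc₂))
  obtain ⟨N, hN1, hNP, hNQ⟩ :
      ∃ N : ℕ, 1 ≤ N ∧ (‖P ^ N‖₊ : ℝ≥0∞) < (c₁ : ℝ≥0∞) ^ N ∧
        (‖Qi ^ N‖₊ : ℝ≥0∞) < (c₂ : ℝ≥0∞) ^ N := by
    obtain ⟨N, hN⟩ := ((eventually_ge_atTop 1).and (hevP.and hevQ)).exists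
    exact ⟨N, hN.1, hN.2.1, hN.2.2⟩
  -- the Sylvester iteration
  set x : A := (s : A) - (r : A) with hxdef
  have hkey : (s : A) * x + x * (r : A) = 0 := by
    have h2' : (s : A) * (s : A) = (r : A) * (r : A) := by
      have := h2
      rwa [sq, sq] at this
    rw [hxdef]
    rw [mul_sub, sub_mul, h2']
    abel
  have hPxQ : P * x = x * Q := by
    have hxr : x * (r : A) = -((s : A) * x) := by
      rw [eq_neg_iff_add_eq_zero, add_comm]
      exact hkey
    rw [hPdef, hQdef, sub_mul, one_mul, mul_add, mul_one, smul_mul_assoc, mul_smul_comm,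
      hxr, smul_neg]
    abel
  have hQQi : Q * Qi = 1 := by
    rw [hQidef, ← hQU, Units.mul_inv]
  have hiter : ∀ n : ℕ, x = P ^ n * x * Qi ^ n := by
    intro n
    induction n with
    | zero => simp
    | succ n ih =>
      have hstep : P * x * Qi = x := by
        rw [hPxQ, mul_assoc, hQQi, mul_one]
      calc x = P ^ n * x * Qi ^ n := ih
        _ = P ^ n * (P * x * Qi) * Qi ^ n := by rw [hstep]
        _ = P ^ (n + 1) * x * Qi ^ (n + 1) := by
            rw [pow_succ, pow_succ']
            simp only [mul_assoc]
  -- conclude x = 0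
  have hx0 : x = 0 := by
    by_contra hx
    have hxpos : (0 : ℝ≥0∞) < (‖x‖₊ : ℝ≥0∞) := by
      simpa [pos_iff_ne_zero] using hx
    have hle : (‖x‖₊ : ℝ≥0∞) ≤ (‖P ^ N‖₊ : ℝ≥0∞) * ‖x‖₊ * ‖Qi ^ N‖₊ := by
      calc (‖x‖₊ : ℝ≥0∞) = (‖P ^ N * x * Qi ^ N‖₊ : ℝ≥0∞) := by rw [← hiter N]
        _ ≤ (‖P ^ N * x‖₊ : ℝ≥0∞) * ‖Qi ^ N‖₊ := by
            exact_mod_cast nnnorm_mul_le _ _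
        _ ≤ (‖P ^ N‖₊ : ℝ≥0∞) * ‖x‖₊ * ‖Qi ^ N‖₊ := by
            gcongr
            exact_mod_cast nnnorm_mul_le _ _
    have hle2 : (‖x‖₊ : ℝ≥0∞) ≤ ((c₁ * c₂ : ℝ≥0) : ℝ≥0∞) ^ N * ‖x‖₊ := by
      calc (‖x‖₊ : ℝ≥0∞) ≤ (‖P ^ N‖₊ : ℝ≥0∞) * ‖x‖₊ * ‖Qi ^ N‖₊ := hle
        _ ≤ (c₁ : ℝ≥0∞) ^ N * ‖x‖₊ * (c₂ : ℝ≥0∞) ^ N :=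
            mul_le_mul' (mul_le_mul' hNP.le le_rfl) hNQ.le
        _ = ((c₁ * c₂ : ℝ≥0) : ℝ≥0∞) ^ N * ‖x‖₊ := by
            push_cast
            ring
    have hcc1 : ((c₁ * c₂ : ℝ≥0) : ℝ≥0∞) < 1 := by
      exact_mod_cast hc₁c₂
    have hpowlt : ((c₁ * c₂ : ℝ≥0) : ℝ≥0∞) ^ N < 1 :=
      pow_lt_one₀ zero_le hcc1 (by omega)
    have hfin : (‖x‖₊ : ℝ≥0∞) < ‖x‖₊ := by
      refine lt_of_le_of_lt hle2 ?_
      calc ((c₁ * c₂ : ℝ≥0) : ℝ≥0∞) ^ N * ‖x‖₊ < 1 * ‖x‖₊ := by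
            rw [ENNReal.mul_lt_mul_iff_left hxpos.ne' ENNReal.coe_ne_top]
            exact hpowlt
        _ = ‖x‖₊ := one_mul _
    exact lt_irrefl _ hfin
  have := sub_eq_zero.mp (hxdef ▸ hx0)
  exact this


/-- If `d` squares to zero and a conjugate of `1 + d` has norm at most one, then `d = 0`. -/
lemma core_nilp_eq_zero (s : Aˣ) (d : A) (hd : d * d = 0)
    (h : ‖(s : A) * (1 + d) * ((s⁻¹ : Aˣ) : A)‖ ≤ 1) : d = 0 := by
  set x : A := (s : A) * d * ((s⁻¹ : Aˣ) : A) with hxdef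
  have hconj : (s : A) * (1 + d) * ((s⁻¹ : Aˣ) : A) = 1 + x := by
    rw [mul_add, add_mul, mul_one, Units.mul_inv, hxdef]
  have hxx : x * x = 0 := by
    have : x * x = (s : A) * (d * d) * ((s⁻¹ : Aˣ) : A) := by
      rw [hxdef]
      simp only [mul_assoc]
      rw [Units.inv_mul_cancel_left]
    rw [this, hd, mul_zero, zero_mul]
  have key : ∀ n : ℕ, (1 + x) ^ n = 1 + (n : ℂ) • x := by
    intro n
    induction n with
    | zero => simp
    | succ n ih =>
      rw [pow_succ, ih, add_mul, one_mul, mul_add, mul_one, smul_mul_assoc, hxx, smul_zero,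
        add_zero, Nat.cast_succ, add_smul, one_smul]
      abel
  have hb : ∀ n : ℕ, 0 < n → (n : ℝ) * ‖x‖ ≤ 1 + ‖(1 : A)‖ := by
    intro n hn
    have h1 : ‖(1 + x) ^ n‖ ≤ 1 := by
      calc ‖(1 + x) ^ n‖ = ‖((s : A) * (1 + d) * ((s⁻¹ : Aˣ) : A)) ^ n‖ := by rw [hconj]
        _ ≤ ‖(s : A) * (1 + d) * ((s⁻¹ : Aˣ) : A)‖ ^ n := norm_pow_le' _ hn
        _ ≤ 1 ^ n := pow_le_pow_left₀ (norm_nonneg _) h n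
        _ = 1 := one_pow n
    have h2 : ‖(n : ℂ) • x‖ ≤ ‖(1 + x) ^ n‖ + ‖(1 : A)‖ := by
      rw [key n]
      calc ‖(n : ℂ) • x‖ = ‖(1 + (n : ℂ) • x) - 1‖ := by rw [add_sub_cancel_left]
        _ ≤ ‖1 + (n : ℂ) • x‖ + ‖(1 : A)‖ := norm_sub_le _ _
    have h3 : ‖(n : ℂ) • x‖ = (n : ℝ) * ‖x‖ := by
      rw [norm_smul, Complex.norm_natCast]
    linarith
  have hx0 : x = 0 := by
    by_contra hx
    have hxpos : 0 < ‖x‖ := norm_pos_iff.mpr hx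
    obtain ⟨n, hn⟩ := exists_nat_gt ((1 + ‖(1 : A)‖) / ‖x‖)
    have hn0 : 0 < n := by
      by_contra hc
      push_neg at hc
      interval_cases n
      · simp at hn
        nlinarith [norm_nonneg (1 : A), div_nonneg (by positivity : (0:ℝ) ≤ 1 + ‖(1:A)‖) (le_of_lt hxpos)]
    have := hb n hn0
    rw [div_lt_iff₀ hxpos] at hn
    linarith
  have : d = ((s⁻¹ : Aˣ) : A) * x * (s : A) := by
    rw [hxdef]
    simp only [mul_assoc]
    rw [Units.inv_mul_cancel_left, Units.inv_mul, mul_one]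
  rw [this, hx0, mul_zero, zero_mul]

set_option maxHeartbeats 1000000 in
/-- Exponential of an idempotent. -/
lemma exp_smul_idem {p : A} (hp : p * p = p) (z : ℂ) :
    exp (z • p) = 1 + (Complex.exp z - 1) • p := by
  have hpn : ∀ n : ℕ, p ^ (n + 1) = p := by
    intro n
    induction n with
    | zero => simp
    | succ n ih => rw [pow_succ, ih, hp]
  have hsum : Summable (fun n : ℕ => ((Nat.factorial n : ℂ))⁻¹ • (z • p) ^ n) :=
    expSeries_summable' (𝕂 := ℂ) (z • p)
  have hgsum : Summable (fun n : ℕ => ((Nat.factorial n : ℂ))⁻¹ * z ^ n) := by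
    simpa [smul_eq_mul] using expSeries_summable' (𝕂 := ℂ) (𝔸 := ℂ) z
  have hgsum' : Summable (fun n : ℕ => ((Nat.factorial (n + 1) : ℂ))⁻¹ * z ^ (n + 1)) :=
    (_root_.summable_nat_add_iff 1).mpr hgsum
  have hexpz : Complex.exp z = 1 + ∑' n : ℕ, ((Nat.factorial (n + 1) : ℂ))⁻¹ * z ^ (n + 1) := by
    have h0 : Complex.exp z = ∑' n : ℕ, ((Nat.factorial n : ℂ))⁻¹ * z ^ n := by
      rw [Complex.exp_eq_exp_ℂ, exp_eq_tsum ℂ]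
      simp [smul_eq_mul]
    rw [h0, Summable.tsum_eq_zero_add hgsum]
    simp
  rw [exp_eq_tsum ℂ]
  beta_reduce
  rw [Summable.tsum_eq_zero_add hsum]
  have hterm : ∀ n : ℕ, ((Nat.factorial (n + 1) : ℂ))⁻¹ • (z • p) ^ (n + 1)
      = (((Nat.factorial (n + 1) : ℂ))⁻¹ * z ^ (n + 1)) • p := by
    intro n
    rw [smul_pow, hpn, smul_smul]
  calc ((Nat.factorial 0 : ℂ))⁻¹ • (z • p) ^ 0 + ∑' n : ℕ, ((Nat.factorial (n + 1) : ℂ))⁻¹ • (z • p) ^ (n + 1)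
      = 1 + ∑' n : ℕ, (((Nat.factorial (n + 1) : ℂ))⁻¹ * z ^ (n + 1)) • p := by
        simp only [hterm]; simp
    _ = 1 + (∑' n : ℕ, ((Nat.factorial (n + 1) : ℂ))⁻¹ * z ^ (n + 1)) • p := by
        rw [Summable.tsum_smul_const]
        exact hgsum'
    _ = 1 + (Complex.exp z - 1) • p := by rw [hexpz, add_sub_cancel_left]

/-- Two idempotents, hermitian with respect to the same weight, which satisfy either
`pq = q, qp = p` (same range) or `pq = p, qp = q` (same kernel), are equal. -/
lemma herm_wt_pair {u p q : A} (hp2 : p * p = p) (hq2 : q * q = q)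
    (hcase : (p * q = q ∧ q * p = p) ∨ (p * q = p ∧ q * p = q))
    (hup : IsHermitianWt u p) (huq : IsHermitianWt u q) : p = q := by
  obtain ⟨s, hspos, hs2, hsn⟩ := hup
  obtain ⟨r, hrpos, hr2, hrn⟩ := huq
  have hsr : (s : A) = (r : A) := sqrt_unique hspos.2 hrpos.2 (by rw [hs2, hr2])
  have hsu : s = r := Units.ext hsr
  subst hsu
  -- the value of the exponential at t = π
  have hval : ∀ a : A, a * a = a →
      NormedSpace.exp ((Complex.I * ((Real.pi : ℝ) : ℂ)) • a) = 1 + (-2 : ℂ) • a := by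
    intro a ha
    rw [exp_smul_idem ha]
    congr 1
    rw [mul_comm, Complex.exp_pi_mul_I]
    norm_num
  have hnp : ‖(s : A) * (1 + (-2 : ℂ) • p) * ((s⁻¹ : Aˣ) : A)‖ = 1 := by
    have := hsn Real.pi
    rwa [hval p hp2] at this
  have hnq : ‖(s : A) * (1 + (-2 : ℂ) • q) * ((s⁻¹ : Aˣ) : A)‖ = 1 := by
    have := hrn Real.pi
    rwa [hval q hq2] at this
  -- the product of the two conjugates
  have hprod : ((s : A) * (1 + (-2 : ℂ) • p) * ((s⁻¹ : Aˣ) : A)) *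
      ((s : A) * (1 + (-2 : ℂ) • q) * ((s⁻¹ : Aˣ) : A)) =
      (s : A) * ((1 + (-2 : ℂ) • p) * (1 + (-2 : ℂ) • q)) * ((s⁻¹ : Aˣ) : A) := by
    simp only [mul_assoc]
    rw [Units.inv_mul_cancel_left]
  -- in both cases, we get 1 + d with d * d = 0 and (d = 0 → p = q)
  obtain ⟨d, hd0, hdval, hdpq⟩ : ∃ d : A, d * d = 0 ∧
      (1 + (-2 : ℂ) • p) * (1 + (-2 : ℂ) • q) = 1 + d ∧ (d = 0 → p = q) := by
    have hsq : ∀ a b : A, a * a = a → b * b = b → a * b + b * a = a + b →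
        (a - b) * (a - b) = 0 := by
      intro a b h1 h2 h3
      have : (a - b) * (a - b) = a * a + b * b - (a * b + b * a) := by
        rw [mul_sub, sub_mul, sub_mul]
        abel
      rw [this, h1, h2, h3]
      abel
    have hexp : ∀ a b : A, (1 + (-2 : ℂ) • a) * (1 + (-2 : ℂ) • b) =
        1 + ((-2 : ℂ) • a + (-2 : ℂ) • b + (4 : ℂ) • (a * b)) := by
      intro a b
      have h4 : ((-2 : ℂ) • a) * ((-2 : ℂ) • b) = (4 : ℂ) • (a * b) := by
        rw [smul_mul_assoc, mul_smul_comm, smul_smul]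
        norm_num
      simp only [mul_add, add_mul, one_mul, mul_one]
      rw [h4]
      abel
    rcases hcase with ⟨hpq, hqp⟩ | ⟨hpq, hqp⟩
    · refine ⟨(2 : ℂ) • (q - p), ?_, ?_, ?_⟩
      · have hqp0 : (q - p) * (q - p) = 0 := by
          refine hsq q p hq2 hp2 ?_
          rw [hqp, hpq]
          abel
        rw [smul_mul_assoc, mul_smul_comm, smul_smul, hqp0, smul_zero]
      · rw [hexp p q, hpq]
        congr 1
        module
      · intro hd
        rcases smul_eq_zero.mp hd with h | h
        · norm_num at h
        · rw [sub_eq_zero] at h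
          exact h.symm
    · refine ⟨(2 : ℂ) • (p - q), ?_, ?_, ?_⟩
      · have hpq0 : (p - q) * (p - q) = 0 := by
          refine hsq p q hp2 hq2 ?_
          rw [hqp, hpq]
        rw [smul_mul_assoc, mul_smul_comm, smul_smul, hpq0, smul_zero]
      · rw [hexp p q, hpq]
        congr 1
        module
      · intro hd
        rcases smul_eq_zero.mp hd with h | h
        · norm_num at h
        · rw [sub_eq_zero] at h
          exact h
  refine hdpq (core_nilp_eq_zero s d hd0 ?_)
  have := hprod
  rw [hdval] at this
  rw [← this]
  calc ‖(s : A) * (1 + (-2 : ℂ) • p) * ((s⁻¹ : Aˣ) : A) *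
        ((s : A) * (1 + (-2 : ℂ) • q) * ((s⁻¹ : Aˣ) : A))‖
      ≤ ‖(s : A) * (1 + (-2 : ℂ) • p) * ((s⁻¹ : Aˣ) : A)‖ *
        ‖(s : A) * (1 + (-2 : ℂ) • q) * ((s⁻¹ : Aˣ) : A)‖ := norm_mul_le _ _
    _ ≤ 1 := by rw [hnp, hnq]; norm_num

end AuxiliaryLemmas

/-- **Reverse order law for the factorization `T = B C`.** -/
theorem factorization_BC_reverse_order_law
    {X Y : Type*} [NormedAddCommGroup X] [NormedSpace ℂ X] [CompleteSpace X]
    [NormedAddCommGroup Y] [NormedSpace ℂ Y] [CompleteSpace Y]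
    (E H : X →L[ℂ] X) (F : Y →L[ℂ] Y)
    (hE : IsPositiveEl E ∧ IsUnit E) (hH : IsPositiveEl H ∧ IsUnit H)
    (hF : IsPositiveEl F ∧ IsUnit F)
    (T : X →L[ℂ] X) (C : X →L[ℂ] Y) (B : Y →L[ℂ] X)
    (hC : Function.Surjective C) (hB : Function.Injective B)
    (hBC : T = B.comp C)
    (ST : X →L[ℂ] X) (hST : IsWMPIop E H T ST)
    (SB : X →L[ℂ] Y) (hSB : IsWMPIop E F B SB)
    (SC : Y →L[ℂ] X) (hSC : IsWMPIop F H C SC) :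
    ST = SC.comp SB ∧ T.comp ST = B.comp SB ∧ ST.comp T = SC.comp C ∧
    SB = C.comp ST ∧ SC = ST.comp B ∧ T.comp SC = B ∧ SB.comp T = C := by
  obtain ⟨hST1, hST2, hSTE, hSTH⟩ := hST
  obtain ⟨hSB1, hSB2, hSBE, hSBF⟩ := hSB
  obtain ⟨hSC1, hSC2, hSCF, hSCH⟩ := hSC
  have hT : ∀ x, T x = B (C x) := fun x => by rw [hBC]; rfl
  have f1 : ∀ x, T (ST (T x)) = T x := fun x => by
    simpa using DFunLike.congr_fun hST1 x
  have f2 : ∀ x, ST (T (ST x)) = ST x := fun x => by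
    simpa using DFunLike.congr_fun hST2 x
  have f3 : ∀ y, SB (B y) = y := fun y => hB (by simpa using DFunLike.congr_fun hSB1 y)
  have fSB : ∀ x, SB (B (SB x)) = SB x := fun x => by
    simpa using DFunLike.congr_fun hSB2 x
  have f4 : ∀ y, C (SC y) = y := by
    intro y
    obtain ⟨x, rfl⟩ := hC y
    simpa using DFunLike.congr_fun hSC1 x
  have fSC : ∀ y, SC (C (SC y)) = SC y := fun y => by
    simpa using DFunLike.congr_fun hSC2 y
  have goal6 : T.comp SC = B := by
    ext y
    simp only [ContinuousLinearMap.comp_apply]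
    rw [hT, f4]
  have g6p : ∀ y, T (SC y) = B y := fun y => by
    simpa using DFunLike.congr_fun goal6 y
  have goal7 : SB.comp T = C := by
    ext x
    simp only [ContinuousLinearMap.comp_apply]
    rw [hT, f3]
  have g7p : ∀ x, SB (T x) = C x := fun x => by
    simpa using DFunLike.congr_fun goal7 x
  have goal2 : T.comp ST = B.comp SB := by
    refine herm_wt_pair ?_ ?_ (Or.inl ⟨?_, ?_⟩) hSTE hSBE
    · ext x
      simp only [ContinuousLinearMap.mul_apply, ContinuousLinearMap.comp_apply]
      exact f1 (ST x)
    · ext x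
      simp only [ContinuousLinearMap.mul_apply, ContinuousLinearMap.comp_apply]
      rw [f3]
    · ext x
      simp only [ContinuousLinearMap.mul_apply, ContinuousLinearMap.comp_apply]
      calc T (ST (B (SB x))) = T (ST (T (SC (SB x)))) := by rw [g6p]
        _ = T (SC (SB x)) := f1 _
        _ = B (SB x) := g6p _
    · ext x
      simp only [ContinuousLinearMap.mul_apply, ContinuousLinearMap.comp_apply]
      calc B (SB (T (ST x))) = B (SB (B (C (ST x)))) := by rw [← hT]
        _ = B (C (ST x)) := by rw [f3]
        _ = T (ST x) := (hT _).symm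
  have g2p : ∀ x, T (ST x) = B (SB x) := fun x => by
    simpa using DFunLike.congr_fun goal2 x
  have goal3 : ST.comp T = SC.comp C := by
    refine herm_wt_pair ?_ ?_ (Or.inr ⟨?_, ?_⟩) hSTH hSCH
    · ext x
      simp only [ContinuousLinearMap.mul_apply, ContinuousLinearMap.comp_apply]
      exact f2 (T x)
    · ext x
      simp only [ContinuousLinearMap.mul_apply, ContinuousLinearMap.comp_apply]
      exact fSC (C x)
    · ext x
      simp only [ContinuousLinearMap.mul_apply, ContinuousLinearMap.comp_apply]
      calc ST (T (SC (C x))) = ST (B (C x)) := by rw [g6p]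
        _ = ST (T x) := by rw [← hT]
    · ext x
      simp only [ContinuousLinearMap.mul_apply, ContinuousLinearMap.comp_apply]
      have hCST : C (ST (T x)) = C x := by
        rw [← g7p, f1, g7p]
      rw [hCST]
  have g3p : ∀ x, ST (T x) = SC (C x) := fun x => by
    simpa using DFunLike.congr_fun goal3 x
  have goal5 : SC = ST.comp B := by
    ext y
    simp only [ContinuousLinearMap.comp_apply]
    calc SC y = SC (C (SC y)) := (fSC y).symm
      _ = ST (T (SC y)) := (g3p _).symm
      _ = ST (B y) := by rw [g6p]
  have goal4 : SB = C.comp ST := by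
    ext x
    simp only [ContinuousLinearMap.comp_apply]
    calc SB x = SB (B (SB x)) := (fSB x).symm
      _ = SB (T (ST x)) := by rw [g2p]
      _ = SB (B (C (ST x))) := by rw [hT (ST x)]
      _ = C (ST x) := f3 _
  have g4p : ∀ x, SB x = C (ST x) := fun x => by
    simpa using DFunLike.congr_fun goal4 x
  have goal1 : ST = SC.comp SB := by
    ext x
    simp only [ContinuousLinearMap.comp_apply]
    calc ST x = ST (T (ST x)) := (f2 x).symm
      _ = SC (C (ST x)) := g3p _
      _ = SC (SB x) := by rw [← g4p]
  exact ⟨goal1, goal2, goal3, goal4, goal5, goal6, goal7⟩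
end
end

section
/- Let X and Y be complex Banach spaces, let E, H ∈ L(X) and F ∈ L(Y) be invertible positive operators, let T ∈ L(X) be such that T^†_{E,H} exists, and suppose T = B C with C ∈ L(X,Y) surjective and B ∈ L(Y,X) injective (so that B^†_{E,F} and C^†_{F,H} exist). Then the following are equivalent: (i) T is weighted EP with weights E and H; (ii) B B^†_{E,F} = C^†_{F,H} C; (iii) R(B) = R(C^†_{F,H}) and N(B^†_{E,F}) = N(C). -/
/-!
Common definitions: hermitian and positive elements of a complex unital Banach
algebra, hermitian elements with respect to the equivalent norm induced by an
invertible positive element (weight), and the weighted Moore–Penrose inverse,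
both for Banach algebra elements and for bounded linear operators between
Banach spaces.
-/

noncomputable section

namespace WEPAux
open scoped Nat ENNReal
open Filter

variable {A : Type*} [NormedRing A] [NormedAlgebra ℂ A] [CompleteSpace A]

omit [NormedAlgebra ℂ A] [CompleteSpace A] in
lemma pow_idem {p : A} (hp : p * p = p) : ∀ n : ℕ, p ^ (n + 1) = p := by
  intro n
  induction n with
  | zero => simp
  | succ k ih => rw [pow_succ, ih, hp]

lemma summable_aux {p : A} (hp : p * p = p) (c : ℂ) :
    Summable (fun n : ℕ => ((n !⁻¹ : ℂ) * c ^ n) • p ^ n) := by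
  apply Summable.of_norm_bounded (g := fun n : ℕ => (‖c‖ ^ n / n !) * (‖(1:A)‖ + ‖p‖))
  · exact (Real.summable_pow_div_factorial ‖c‖).mul_right _
  · intro n
    rw [norm_smul]
    have h1 : ‖(n !⁻¹ : ℂ) * c ^ n‖ = ‖c‖ ^ n / n ! := by
      rw [norm_mul, norm_pow, norm_inv]
      rw [div_eq_inv_mul]
      congr 2
      simp
    rw [h1]
    apply mul_le_mul_of_nonneg_left _ (by positivity)
    cases n with
    | zero => simp [le_add_of_nonneg_right (norm_nonneg p)]
    | succ k => rw [pow_idem hp]; exact le_add_of_nonneg_left (norm_nonneg _)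

lemma summable_aux' (c : ℂ) : Summable (fun n : ℕ => (n !⁻¹ : ℂ) * c ^ n) := by
  apply Summable.of_norm_bounded (g := fun n : ℕ => ‖c‖ ^ n / n !)
  · exact Real.summable_pow_div_factorial ‖c‖
  · intro n
    rw [norm_mul, norm_pow, norm_inv, div_eq_inv_mul]
    apply le_of_eq
    congr 2
    simp

lemma exp_idem {p : A} (hp : p * p = p) (c : ℂ) :
    NormedSpace.exp (c • p) = 1 + (Complex.exp c - 1) • p := by
  rw [NormedSpace.exp_eq_tsum (𝕂 := ℂ)]
  have h1 : ∀ n : ℕ, (n !⁻¹ : ℂ) • (c • p) ^ n = ((n !⁻¹ : ℂ) * c ^ n) • p ^ n := by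
    intro n
    rw [smul_pow, smul_smul]
  simp only [h1]
  rw [Summable.tsum_eq_zero_add (summable_aux hp c)]
  have h2 : ∀ n : ℕ, (((n+1) !⁻¹ : ℂ) * c ^ (n+1)) • p ^ (n+1)
      = (((n+1) !⁻¹ : ℂ) * c ^ (n+1)) • p := by
    intro n; rw [pow_idem hp]
  simp only [h2]
  have hs : Summable (fun b : ℕ => ((((b+1) ! : ℂ))⁻¹ * c ^ (b+1))) :=
    (summable_aux' c).comp_injective (add_left_injective 1)
  rw [Summable.tsum_smul_const hs]
  have h3 : ∑' n : ℕ, ((n+1)!⁻¹ : ℂ) * c ^ (n+1) = Complex.exp c - 1 := by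
    have hshift := Summable.tsum_eq_zero_add (f := fun n : ℕ => (n !⁻¹ : ℂ) * c ^ n) (summable_aux' c)
    have hexp : Complex.exp c = ∑' n : ℕ, (n !⁻¹ : ℂ) • c ^ n := by
      rw [Complex.exp_eq_exp_ℂ, NormedSpace.exp_eq_tsum (𝕂 := ℂ)]
    simp only [smul_eq_mul] at hexp
    rw [hexp, hshift]
    simp
  rw [h3]
  simp

omit [CompleteSpace A] in
lemma nilsq_zero (s : Aˣ) (a : A) (hnil : a * a = 0)
    (hb : ‖(s : A) * (1 + a) * (↑s⁻¹ : A)‖ ≤ 1) : a = 0 := by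
  have hpow : ∀ n : ℕ, (1 + a) ^ n = 1 + (n : ℕ) • a := by
    intro n
    induction n with
    | zero => simp
    | succ k ih =>
      rw [pow_succ, ih]
      rw [add_mul, mul_add, mul_add, one_mul, mul_one, smul_mul_assoc, hnil, smul_zero]
      rw [succ_nsmul, one_mul]
      abel
  have hconj : ∀ x : A, ∀ n : ℕ, ((s : A) * x * (↑s⁻¹ : A)) ^ n = (s : A) * x ^ n * (↑s⁻¹ : A) := by
    intro x n
    induction n with
    | zero => simp
    | succ k ih =>
      rw [pow_succ, ih, pow_succ]
      have : (↑s⁻¹ : A) * ((s : A) * x * (↑s⁻¹ : A)) = x * (↑s⁻¹ : A) := by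
        rw [← mul_assoc, ← mul_assoc, Units.inv_mul, one_mul]
      rw [mul_assoc ((s : A) * x ^ k) (↑s⁻¹ : A), this]
      noncomm_ring
  have key : ∀ m : ℕ, ((m + 1 : ℕ) : ℝ) * ‖(s : A) * a * (↑s⁻¹ : A)‖ ≤ 1 + ‖(1 : A)‖ := by
    intro m
    set n := m + 1 with hn_def
    have h1 : ‖(s : A) * (1 + a) ^ n * (↑s⁻¹ : A)‖ ≤ 1 := by
      rw [← hconj]
      calc ‖((s : A) * (1 + a) * (↑s⁻¹ : A)) ^ n‖ ≤ ‖(s : A) * (1 + a) * (↑s⁻¹ : A)‖ ^ n :=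
            norm_pow_le' _ (Nat.succ_pos m)
        _ ≤ 1 ^ n := pow_le_pow_left₀ (norm_nonneg _) hb n
        _ = 1 := one_pow n
    rw [hpow] at h1
    have h2 : (s : A) * (1 + n • a) * (↑s⁻¹ : A)
        = 1 + (n • ((s : A) * a * (↑s⁻¹ : A))) := by
      rw [mul_add, add_mul, mul_one, Units.mul_inv]
      congr 1
      rw [mul_smul_comm, smul_mul_assoc]
    rw [h2] at h1
    have h3 : ‖n • ((s : A) * a * (↑s⁻¹ : A))‖ ≤ ‖(1 : A)‖ + 1 := by
      calc ‖n • ((s : A) * a * (↑s⁻¹ : A))‖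
          = ‖(1 + n • ((s : A) * a * (↑s⁻¹ : A))) - 1‖ := by rw [add_sub_cancel_left]
        _ ≤ ‖1 + n • ((s : A) * a * (↑s⁻¹ : A))‖ + ‖(1 : A)‖ := norm_sub_le _ _
        _ ≤ 1 + ‖(1 : A)‖ := by linarith
        _ = ‖(1 : A)‖ + 1 := by ring
    rw [← Nat.cast_smul_eq_nsmul ℂ, norm_smul] at h3
    simp only [Complex.norm_natCast] at h3
    linarith [h3]
  have hz : ‖(s : A) * a * (↑s⁻¹ : A)‖ = 0 := by
    by_contra hne
    have hpos : 0 < ‖(s : A) * a * (↑s⁻¹ : A)‖ :=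
      lt_of_le_of_ne (norm_nonneg _) (Ne.symm hne)
    obtain ⟨n, hn⟩ := exists_nat_gt ((1 + ‖(1 : A)‖) / ‖(s : A) * a * (↑s⁻¹ : A)‖)
    have hkey := key n
    rw [div_lt_iff₀ hpos] at hn
    have hmono : (n : ℝ) ≤ ((n + 1 : ℕ) : ℝ) := by exact_mod_cast Nat.le_succ n
    nlinarith [hpos]
  have hsa : (s : A) * a * (↑s⁻¹ : A) = 0 := norm_eq_zero.mp hz
  have : a = (↑s⁻¹ : A) * ((s : A) * a * (↑s⁻¹ : A)) * (s : A) := by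
    rw [← mul_assoc, ← mul_assoc, Units.inv_mul, one_mul, mul_assoc, Units.inv_mul, mul_one]
  rw [this, hsa, mul_zero, zero_mul]

omit [CompleteSpace A] in
lemma spec_affine {a : A} {c e : ℂ} (he : e ≠ 0) {μ : ℂ}
    (h : μ ∈ spectrum ℂ (c • (1 : A) + e • a)) : (μ - c) / e ∈ spectrum ℂ a := by
  rw [spectrum.mem_iff] at h ⊢
  intro hu
  apply h
  have key : algebraMap ℂ A μ - (c • (1 : A) + e • a)
      = e • (algebraMap ℂ A ((μ - c) / e) - a) := by
    rw [smul_sub]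
    rw [Algebra.algebraMap_eq_smul_one, Algebra.algebraMap_eq_smul_one]
    rw [smul_smul]
    have : e * ((μ - c) / e) = μ - c := by field_simp
    rw [this]
    module
  rw [key]
  have h1 : IsUnit (algebraMap ℂ A e) := by
    apply IsUnit.map
    exact (isUnit_iff_ne_zero).mpr he
  rw [Algebra.smul_def]
  exact h1.mul hu

omit [CompleteSpace A] in
lemma spec_inv {u : Aˣ} {μ : ℂ} (hμ : μ ≠ 0) (h : μ ∈ spectrum ℂ ((↑u⁻¹ : A))) :
    μ⁻¹ ∈ spectrum ℂ (u : A) := by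
  rw [spectrum.mem_iff] at h ⊢
  intro hu
  apply h
  have key : (↑u⁻¹ : A) * algebraMap ℂ A μ * ((u : A) - algebraMap ℂ A μ⁻¹)
      = algebraMap ℂ A μ - (↑u⁻¹ : A) := by
    rw [mul_assoc, mul_sub, ← map_mul, mul_inv_cancel₀ hμ, map_one, mul_sub, mul_one,
      Algebra.commutes μ ((u : A)), ← mul_assoc, Units.inv_mul, one_mul]
  rw [← key]
  have h2 : IsUnit ((u : A) - algebraMap ℂ A μ⁻¹) := by
    have := hu.neg
    rwa [neg_sub] at this
  exact ((u⁻¹).isUnit.mul (IsUnit.map _ (isUnit_iff_ne_zero.mpr hμ))).mul h2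

lemma spec_pos_bound [Nontrivial A] (s : Aˣ)
    (h : spectrum ℂ (s : A) ⊆ Complex.ofReal '' Set.Ici 0) :
    ∃ δ M : ℝ, 0 < δ ∧ δ ≤ M ∧
      ∀ μ ∈ spectrum ℂ (s : A), ∃ x : ℝ, δ ≤ x ∧ x ≤ M ∧ μ = (x : ℂ) := by
  have hne : (spectrum ℂ (s : A)).Nonempty := spectrum.nonempty _
  have hcpt : IsCompact (spectrum ℂ (s : A)) := spectrum.isCompact _
  obtain ⟨lmin, hlmin, hmin⟩ := hcpt.exists_isMinOn hne continuous_norm.continuousOn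
  obtain ⟨lmax, hlmax, hmax⟩ := hcpt.exists_isMaxOn hne continuous_norm.continuousOn
  have h0 : (0 : ℂ) ∉ spectrum ℂ (s : A) := by
    rw [spectrum.zero_mem_iff]
    exact not_not.mpr s.isUnit
  refine ⟨‖lmin‖, ‖lmax‖, ?_, hmin hlmax, ?_⟩
  · have hne0 : lmin ≠ 0 := fun hh => h0 (hh ▸ hlmin)
    exact norm_pos_iff.mpr hne0
  · intro μ hμ
    obtain ⟨x, hx0, hxe⟩ := h hμ
    refine ⟨x, ?_, ?_, hxe.symm⟩
    · have hle : ‖lmin‖ ≤ ‖μ‖ := hmin hμ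
      rwa [← hxe, Complex.norm_real, Real.norm_eq_abs, abs_of_nonneg hx0] at hle
    · have hle : ‖μ‖ ≤ ‖lmax‖ := hmax hμ
      rwa [← hxe, Complex.norm_real, Real.norm_eq_abs, abs_of_nonneg hx0] at hle

lemma sqrt_unique [Nontrivial A] (s₁ s₂ : Aˣ)
    (h1 : spectrum ℂ (s₁ : A) ⊆ Complex.ofReal '' Set.Ici 0)
    (h2 : spectrum ℂ (s₂ : A) ⊆ Complex.ofReal '' Set.Ici 0)
    (hsq : (s₁ : A) * (s₁ : A) = (s₂ : A) * (s₂ : A)) : (s₁ : A) = (s₂ : A) := by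
  obtain ⟨δ₁, M₁, hδ₁, hδM₁, hb₁⟩ := spec_pos_bound s₁ h1
  obtain ⟨δ₂, M₂, hδ₂, hδM₂, hb₂⟩ := spec_pos_bound s₂ h2
  set δ : ℝ := min δ₁ δ₂ with hδdef
  set M : ℝ := max M₁ M₂ with hMdef
  have hδ : 0 < δ := lt_min hδ₁ hδ₂
  have hδM : δ ≤ M := le_trans (min_le_left _ _) (le_trans hδM₁ (le_max_left _ _))
  set ε : ℝ := (M + 1)⁻¹ with hεdef
  have hM0 : 0 < M + 1 := by linarith [lt_of_lt_of_le hδ hδM]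
  have hε : 0 < ε := inv_pos.mpr hM0
  have hεM : ∀ x : ℝ, x ≤ M → ε * x < 1 := by
    intro x hx
    calc ε * x ≤ ε * M := by apply mul_le_mul_of_nonneg_left hx hε.le
      _ < ε * (M + 1) := by apply mul_lt_mul_of_pos_left (by linarith) hε
      _ = 1 := inv_mul_cancel₀ hM0.ne'
  set t : ℝ := ε * δ with htdef
  have ht0 : 0 < t := mul_pos hε hδ
  have ht1 : t < 1 := hεM δ hδM
  set v : A := (1 : A) - (ε : ℂ) • (s₁ : A) with hvdef
  have hεne : ((ε : ℝ) : ℂ) ≠ 0 := by exact_mod_cast hε.ne'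
  have hv_spec : ∀ μ ∈ spectrum ℂ v, ‖μ‖ ≤ 1 - t := by
    intro μ hμ
    have hform : v = (1 : ℂ) • (1 : A) + (-(ε : ℂ)) • (s₁ : A) := by
      rw [hvdef, one_smul, neg_smul, sub_eq_add_neg]
    rw [hform] at hμ
    have hx := spec_affine (neg_ne_zero.mpr hεne) hμ
    obtain ⟨x, hxl, hxu, hxe⟩ := hb₁ _ hx
    have hμe : μ = 1 - (ε : ℂ) * (x : ℂ) := by
      have : μ - 1 = -(ε : ℂ) * (x : ℂ) := by
        rw [← hxe]
        field_simp
      linear_combination this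
    have hcast : μ = ((1 - ε * x : ℝ) : ℂ) := by
      rw [hμe]; push_cast; ring
    rw [hcast, Complex.norm_real, Real.norm_eq_abs]
    have hεx1 : ε * x < 1 := hεM x (le_trans hxu (le_max_of_le_left le_rfl))
    have hεxδ : t ≤ ε * x :=
      mul_le_mul_of_nonneg_left (le_trans (min_le_left _ _) hxl) hε.le
    rw [abs_of_nonneg (by linarith)]
    linarith
  have hU : IsUnit ((1 : A) + (ε : ℂ) • (s₂ : A)) := by
    rw [← spectrum.zero_notMem_iff ℂ]
    intro h0
    have hform : (1 : A) + (ε : ℂ) • (s₂ : A) = (1 : ℂ) • (1 : A) + ((ε : ℝ) : ℂ) • (s₂ : A) := by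
      rw [one_smul]
    rw [hform] at h0
    have hx := spec_affine hεne h0
    obtain ⟨x, hxl, _, hxe⟩ := hb₂ _ hx
    have : ((0 : ℂ) - 1) / ((ε : ℝ) : ℂ) = ((-ε⁻¹ : ℝ) : ℂ) := by
      push_cast; field_simp; ring
    rw [this] at hxe
    have : (-ε⁻¹ : ℝ) = x := by exact_mod_cast hxe
    have : (0:ℝ) < x := lt_of_lt_of_le hδ (le_trans (min_le_right _ _) hxl)
    nlinarith [inv_pos.mpr hε]
  set u₂ : Aˣ := hU.unit with hu₂def
  have hu₂coe : (u₂ : A) = (1 : A) + (ε : ℂ) • (s₂ : A) := rfl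
  set w : A := (↑u₂⁻¹ : A) with hwdef
  have hw_spec : ∀ μ ∈ spectrum ℂ w, ‖μ‖ ≤ (1 + t)⁻¹ := by
    intro μ hμ
    have hμ0 : μ ≠ 0 := by
      intro h0
      rw [h0] at hμ
      rw [spectrum.zero_mem_iff] at hμ
      exact hμ (u₂⁻¹).isUnit
    have hinv := spec_inv hμ0 hμ
    rw [hu₂coe] at hinv
    have hform : (1 : A) + (ε : ℂ) • (s₂ : A) = (1 : ℂ) • (1 : A) + ((ε : ℝ) : ℂ) • (s₂ : A) := by
      rw [one_smul]
    rw [hform] at hinv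
    have hx := spec_affine hεne hinv
    obtain ⟨x, hxl, hxu, hxe⟩ := hb₂ _ hx
    have hμinv : μ⁻¹ = ((1 + ε * x : ℝ) : ℂ) := by
      have : μ⁻¹ - 1 = ((ε : ℝ) : ℂ) * (x : ℂ) := by
        rw [← hxe]; field_simp
      push_cast
      linear_combination this
    have hεxδ : t ≤ ε * x :=
      mul_le_mul_of_nonneg_left (le_trans (min_le_right _ _) hxl) hε.le
    have hnorminv : ‖μ⁻¹‖ = 1 + ε * x := by
      rw [hμinv, Complex.norm_real, Real.norm_eq_abs, abs_of_nonneg (by linarith)]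
    have h1t : 0 < 1 + t := by linarith
    rw [norm_inv] at hnorminv
    have hμpos : 0 < ‖μ‖ := norm_pos_iff.mpr hμ0
    rw [inv_eq_iff_eq_inv] at hnorminv
    rw [hnorminv]
    apply inv_anti₀ h1t
    linarith
  have hr_v : spectralRadius ℂ v ≤ ENNReal.ofReal (1 - t) := by
    rw [spectralRadius]
    refine iSup₂_le fun μ hμ => ?_
    rw [← enorm_eq_nnnorm, ← ofReal_norm]
    exact ENNReal.ofReal_le_ofReal (hv_spec μ hμ)
  have hr_w : spectralRadius ℂ w ≤ ENNReal.ofReal (1 + t)⁻¹ := by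
    rw [spectralRadius]
    refine iSup₂_le fun μ hμ => ?_
    rw [← enorm_eq_nnnorm, ← ofReal_norm]
    exact ENNReal.ofReal_le_ofReal (hw_spec μ hμ)
  set c₁ : ℝ := 1 - t / 2 with hc₁def
  set c₂ : ℝ := (1 + t / 2) / (1 + t) with hc₂def
  have hc₁pos : 0 < c₁ := by rw [hc₁def]; linarith
  have hc₂pos : 0 < c₂ := by rw [hc₂def]; positivity
  have hlt₁ : (1 : ℝ) - t < c₁ := by rw [hc₁def]; linarith
  have hlt₂ : (1 + t)⁻¹ < c₂ := by
    rw [hc₂def, div_eq_inv_mul]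
    nth_rewrite 1 [← mul_one (1 + t)⁻¹]
    apply mul_lt_mul_of_pos_left (by linarith) (by positivity)
  have hc₁c₂ : c₁ * c₂ < 1 := by
    rw [hc₁def, hc₂def]
    rw [mul_div_assoc', div_lt_one (by linarith)]
    nlinarith
  have hgel₁ := spectrum.pow_nnnorm_pow_one_div_tendsto_nhds_spectralRadius v
  have hgel₂ := spectrum.pow_nnnorm_pow_one_div_tendsto_nhds_spectralRadius w
  have hlt₁' : spectralRadius ℂ v < ENNReal.ofReal c₁ :=
    lt_of_le_of_lt hr_v (by
      rw [ENNReal.ofReal_lt_ofReal_iff hc₁pos]; exact hlt₁)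
  have hlt₂' : spectralRadius ℂ w < ENNReal.ofReal c₂ :=
    lt_of_le_of_lt hr_w (by
      rw [ENNReal.ofReal_lt_ofReal_iff hc₂pos]; exact hlt₂)
  have hev₁ := hgel₁.eventually_lt_const hlt₁'
  have hev₂ := hgel₂.eventually_lt_const hlt₂'
  obtain ⟨n, hn⟩ := ((hev₁.and hev₂).and (eventually_ge_atTop 1)).exists
  obtain ⟨⟨hn₁, hn₂⟩, hn1⟩ := hn
  have hnne : (n : ℝ) ≠ 0 := by exact_mod_cast Nat.one_le_iff_ne_zero.mp hn1
  have hconv : ∀ (x : A) (c : ℝ), 0 < c →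
      (‖x ^ n‖₊ : ℝ≥0∞) ^ (1 / (n : ℝ)) < ENNReal.ofReal c → ‖x ^ n‖ ≤ c ^ n := by
    intro x c hc hlt
    have h1 : ((‖x ^ n‖₊ : ℝ≥0∞) ^ (1 / (n : ℝ))) ^ (n : ℝ)
        ≤ (ENNReal.ofReal c) ^ (n : ℝ) := ENNReal.rpow_le_rpow hlt.le (by positivity)
    rw [← ENNReal.rpow_mul, one_div, inv_mul_cancel₀ hnne, ENNReal.rpow_one] at h1
    rw [ENNReal.rpow_natCast, ← ENNReal.ofReal_pow hc.le] at h1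
    rw [← enorm_eq_nnnorm, ← ofReal_norm] at h1
    rwa [ENNReal.ofReal_le_ofReal_iff (by positivity)] at h1
  have hnv : ‖v ^ n‖ ≤ c₁ ^ n := hconv v c₁ hc₁pos hn₁
  have hnw : ‖w ^ n‖ ≤ c₂ ^ n := hconv w c₂ hc₂pos hn₂
  set d : A := (s₁ : A) - (s₂ : A) with hddef
  have hkey : (s₁ : A) * d + d * (s₂ : A) = 0 := by
    rw [hddef]
    have expand : (s₁ : A) * ((s₁ : A) - (s₂ : A)) + ((s₁ : A) - (s₂ : A)) * (s₂ : A)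
        = (s₁ : A) * (s₁ : A) - (s₂ : A) * (s₂ : A) := by noncomm_ring
    rw [expand, hsq, sub_self]
  have hs₁d : (s₁ : A) * d = -(d * (s₂ : A)) := eq_neg_of_add_eq_zero_left hkey
  have hdv : v * d = d * (u₂ : A) := by
    rw [hvdef, hu₂coe]
    rw [sub_mul, one_mul, mul_add, mul_one]
    rw [smul_mul_assoc, hs₁d, mul_smul_comm]
    rw [smul_neg, sub_neg_eq_add]
  have hstep : d = v * d * w := by
    rw [hwdef, hdv, mul_assoc, Units.mul_inv, mul_one]
  have hiter : ∀ m : ℕ, d = v ^ m * d * w ^ m := by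
    intro m
    induction m with
    | zero => simp
    | succ k ih =>
      rw [pow_succ v, pow_succ' w]
      calc d = v ^ k * d * w ^ k := ih
        _ = v ^ k * (v * d * w) * w ^ k := by rw [← hstep]
        _ = v ^ k * v * d * (w * w ^ k) := by noncomm_ring
  have hd0 : d = 0 := by
    by_contra hne
    have hdpos : 0 < ‖d‖ := norm_pos_iff.mpr hne
    have hb : ‖d‖ ≤ (c₁ * c₂) ^ n * ‖d‖ := by
      calc ‖d‖ = ‖v ^ n * d * w ^ n‖ := by rw [← hiter n]
        _ ≤ ‖v ^ n * d‖ * ‖w ^ n‖ := norm_mul_le _ _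
        _ ≤ ‖v ^ n‖ * ‖d‖ * ‖w ^ n‖ := by
            apply mul_le_mul_of_nonneg_right (norm_mul_le _ _) (norm_nonneg _)
        _ ≤ c₁ ^ n * ‖d‖ * (c₂ ^ n) := by
            apply mul_le_mul (mul_le_mul_of_nonneg_right hnv (norm_nonneg _)) hnw
              (norm_nonneg _) (by positivity)
        _ = (c₁ * c₂) ^ n * ‖d‖ := by rw [mul_pow]; ring
    have hq : (c₁ * c₂) ^ n < 1 :=
      pow_lt_one₀ (by positivity) hc₁c₂ (Nat.one_le_iff_ne_zero.mp hn1)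
    nlinarith
  rw [hddef] at hd0
  exact sub_eq_zero.mp hd0

/-- Two idempotents, both hermitian with respect to the same weight, with
`pq = q, qp = p` (or `pq = p, qp = q`) are equal. -/
lemma herm_idem_eq {u p q : A} (hp : p * p = p) (hq : q * q = q)
    (hrel : (p * q = q ∧ q * p = p) ∨ (p * q = p ∧ q * p = q))
    (h1 : IsHermitianWt u p) (h2 : IsHermitianWt u q) : p = q := by
  obtain ⟨s, hspos, hssq, hsnorm⟩ := h1
  obtain ⟨s', hspos', hssq', hsnorm'⟩ := h2
  -- nontriviality
  have hone : ‖(1 : A)‖ = 1 := by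
    have h0 := hsnorm 0
    simpa [Units.mul_inv] using h0
  have : Nontrivial A := by
    refine nontrivial_of_ne 1 0 fun hcon => ?_
    rw [hcon, norm_zero] at hone
    exact one_ne_zero hone.symm
  -- equal square roots
  have hsame : (s : A) = (s' : A) := by
    apply sqrt_unique s s' hspos.2 hspos'.2
    rw [← pow_two, ← pow_two, hssq, hssq']
  -- exponentials at t = π
  have hexp : ∀ r : A, r * r = r →
      NormedSpace.exp ((Complex.I * ((Real.pi : ℝ) : ℂ)) • r) = 1 + (-2 : ℂ) • r := by
    intro r hr
    rw [exp_idem hr]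
    congr 1
    rw [mul_comm Complex.I]
    rw [Complex.exp_pi_mul_I]
    norm_num
  have hnp := hsnorm Real.pi
  have hnq := hsnorm' Real.pi
  rw [hexp p hp] at hnp
  rw [hexp q hq] at hnq
  have hsu : s' = s := (Units.ext hsame).symm
  rw [hsu] at hnq
  -- multiply the two contractions
  have hmul : ‖((s : A) * (1 + (-2 : ℂ) • p) * (↑s⁻¹ : A))
      * ((s : A) * (1 + (-2 : ℂ) • q) * (↑s⁻¹ : A))‖ ≤ 1 := by
    calc ‖((s : A) * (1 + (-2 : ℂ) • p) * (↑s⁻¹ : A))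
        * ((s : A) * (1 + (-2 : ℂ) • q) * (↑s⁻¹ : A))‖
        ≤ ‖(s : A) * (1 + (-2 : ℂ) • p) * (↑s⁻¹ : A)‖
          * ‖(s : A) * (1 + (-2 : ℂ) • q) * (↑s⁻¹ : A)‖ := norm_mul_le _ _
      _ ≤ 1 := by rw [hnp, hnq, one_mul]
  have hcollapse : ((s : A) * (1 + (-2 : ℂ) • p) * (↑s⁻¹ : A))
      * ((s : A) * (1 + (-2 : ℂ) • q) * (↑s⁻¹ : A))
      = (s : A) * ((1 + (-2 : ℂ) • p) * (1 + (-2 : ℂ) • q)) * (↑s⁻¹ : A) := by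
    have hmid : (↑s⁻¹ : A) * ((s : A) * (1 + (-2 : ℂ) • q)) = 1 + (-2 : ℂ) • q := by
      rw [← mul_assoc, Units.inv_mul, one_mul]
    calc ((s : A) * (1 + (-2 : ℂ) • p) * (↑s⁻¹ : A))
        * ((s : A) * (1 + (-2 : ℂ) • q) * (↑s⁻¹ : A))
        = (s : A) * (1 + (-2 : ℂ) • p) * ((↑s⁻¹ : A) * ((s : A) * (1 + (-2 : ℂ) • q)))
          * (↑s⁻¹ : A) := by noncomm_ring
      _ = (s : A) * ((1 + (-2 : ℂ) • p) * (1 + (-2 : ℂ) • q)) * (↑s⁻¹ : A) := by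
          rw [hmid]; noncomm_ring
  rcases hrel with ⟨hpq, hqp⟩ | ⟨hpq, hqp⟩
  · -- pq = q, qp = p; product is 1 + (-2)•(p - q)
    have hsqzero : (p - q) * (p - q) = 0 := by
      rw [sub_mul, mul_sub, mul_sub, hp, hq, hpq, hqp]
      abel
    have hprod : (1 + (-2 : ℂ) • p) * (1 + (-2 : ℂ) • q) = 1 + (-2 : ℂ) • (p - q) := by
      rw [add_mul, mul_add, mul_add, one_mul, mul_one]
      rw [smul_mul_smul_comm, hpq]
      rw [smul_sub]
      norm_num
      module
    rw [hprod] at hcollapse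
    rw [hcollapse] at hmul
    have hnil : ((-2 : ℂ) • (p - q)) * ((-2 : ℂ) • (p - q)) = 0 := by
      rw [smul_mul_smul_comm, hsqzero, smul_zero]
    have := nilsq_zero s _ hnil hmul
    have h2 : p - q = 0 := by
      have := smul_eq_zero.mp this
      rcases this with h' | h'
      · norm_num at h'
      · exact h'
    exact sub_eq_zero.mp h2
  · -- pq = p, qp = q; product is 1 + (2:ℂ)•(p - q)
    have hsqzero : (p - q) * (p - q) = 0 := by
      rw [sub_mul, mul_sub, mul_sub, hp, hq, hpq, hqp]
      abel
    have hprod : (1 + (-2 : ℂ) • p) * (1 + (-2 : ℂ) • q) = 1 + (2 : ℂ) • (p - q) := by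
      rw [add_mul, mul_add, mul_add, one_mul, mul_one]
      rw [smul_mul_smul_comm, hpq]
      rw [smul_sub]
      norm_num
      module
    rw [hprod] at hcollapse
    rw [hcollapse] at hmul
    have hnil : ((2 : ℂ) • (p - q)) * ((2 : ℂ) • (p - q)) = 0 := by
      rw [smul_mul_smul_comm, hsqzero, smul_zero]
    have := nilsq_zero s _ hnil hmul
    have h2 : p - q = 0 := by
      have := smul_eq_zero.mp this
      rcases this with h' | h'
      · norm_num at h'
      · exact h'
    exact sub_eq_zero.mp h2

end WEPAux

/-- For `T = B C` as above, `T` is weighted EP with weights `E` and `H` iff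
`B B^†_{E,F} = C^†_{F,H} C`, iff `R(B) = R(C^†_{F,H})` and
`N(B^†_{E,F}) = N(C)`. -/
theorem factorization_BC_weighted_EP_iff_range_ker
    {X Y : Type*} [NormedAddCommGroup X] [NormedSpace ℂ X] [CompleteSpace X]
    [NormedAddCommGroup Y] [NormedSpace ℂ Y] [CompleteSpace Y]
    (E H : X →L[ℂ] X) (F : Y →L[ℂ] Y)
    (hE : IsPositiveEl E ∧ IsUnit E) (hH : IsPositiveEl H ∧ IsUnit H)
    (hF : IsPositiveEl F ∧ IsUnit F)
    (T : X →L[ℂ] X) (C : X →L[ℂ] Y) (B : Y →L[ℂ] X)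
    (hC : Function.Surjective C) (hB : Function.Injective B)
    (hBC : T = B.comp C)
    (ST : X →L[ℂ] X) (hST : IsWMPIop E H T ST)
    (SB : X →L[ℂ] Y) (hSB : IsWMPIop E F B SB)
    (SC : Y →L[ℂ] X) (hSC : IsWMPIop F H C SC) :
    (IsWEPop E H T ↔ B.comp SB = SC.comp C) ∧
    (IsWEPop E H T ↔
      (Set.range ⇑B = Set.range ⇑SC ∧ LinearMap.ker (SB : X →ₗ[ℂ] Y) = LinearMap.ker (C : X →ₗ[ℂ] Y))) := by
  classical
  -- pointwise facts
  have hSBB : ∀ y : Y, SB (B y) = y := by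
    intro y
    apply hB
    have := ContinuousLinearMap.ext_iff.mp hSB.1 y
    simpa using this
  have hCSC : ∀ x : Y, C (SC x) = x := by
    intro x
    obtain ⟨u, rfl⟩ := hC x
    have := ContinuousLinearMap.ext_iff.mp hSC.1 u
    simpa using this
  set Q : X →L[ℂ] X := B.comp SB with hQdef
  set R : X →L[ℂ] X := SC.comp C with hRdef
  have hQapp : ∀ x, Q x = B (SB x) := fun x => rfl
  have hRapp : ∀ x, R x = SC (C x) := fun x => rfl
  have hQQ : Q.comp Q = Q := by
    ext x; simp only [ContinuousLinearMap.comp_apply, hQapp, hSBB]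
  have hRR : R.comp R = R := by
    ext x; simp only [ContinuousLinearMap.comp_apply, hRapp, hCSC]
  -- (ii) → (i)
  have h21 : Q = R → IsWEPop E H T := by
    intro hQR
    refine ⟨SC.comp SB, ⟨?_, ?_, ?_, ?_⟩, ?_⟩
    · ext x
      simp only [ContinuousLinearMap.comp_apply, hBC, hSBB, hCSC]
    · ext x
      simp only [ContinuousLinearMap.comp_apply, hBC, hSBB, hCSC]
    · have : T.comp (SC.comp SB) = Q := by
        ext x
        simp only [ContinuousLinearMap.comp_apply, hBC, hQapp, hCSC]
      rw [this]
      exact hSB.2.2.1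
    · have : (SC.comp SB).comp T = R := by
        ext x
        simp only [ContinuousLinearMap.comp_apply, hBC, hRapp, hSBB]
      rw [this]
      exact hSC.2.2.2
    · have h1 : T.comp (SC.comp SB) = Q := by
        ext x
        simp only [ContinuousLinearMap.comp_apply, hBC, hQapp, hCSC]
      have h2 : (SC.comp SB).comp T = R := by
        ext x
        simp only [ContinuousLinearMap.comp_apply, hBC, hRapp, hSBB]
      rw [h1, h2, hQR]
  -- (i) → (ii)
  have h12 : IsWEPop E H T → Q = R := by
    rintro ⟨S, ⟨hTS1, hTS2, hermE, hermH⟩, hcomm⟩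
    set P : X →L[ℂ] X := T.comp S with hPdef
    have hPapp : ∀ x, P x = T (S x) := fun x => rfl
    have hPapp' : ∀ x, P x = S (T x) := by
      intro x
      have := congrArg (fun f : X →L[ℂ] X => f x) hcomm
      simpa using this
    have hPT : ∀ x, P (T x) = T x := by
      intro x
      have := congrArg (fun f : X →L[ℂ] X => f x) hTS1
      simpa using this
    have hPB : ∀ y, P (B y) = B y := by
      intro y
      obtain ⟨x, rfl⟩ := hC y
      have hTx : T x = B (C x) := by rw [hBC]; rfl
      rw [← hTx, hPT]
    have hTP : ∀ x, T (P x) = T x := by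
      intro x
      rw [hPapp' x]
      have := congrArg (fun f : X →L[ℂ] X => f x) hTS1
      simp only [ContinuousLinearMap.comp_apply] at this
      exact this
    have hCP : ∀ x, C (P x) = C x := by
      intro x
      apply hB
      have h1 : B (C (P x)) = T (P x) := by rw [hBC]; rfl
      have h2 : B (C x) = T x := by rw [hBC]; rfl
      rw [h1, h2, hTP]
    have hPP : P.comp P = P := by
      ext x
      simp only [ContinuousLinearMap.comp_apply]
      rw [hPapp x, hPT]
    -- relations
    have hPQ : P.comp Q = Q := by
      ext x
      simp only [ContinuousLinearMap.comp_apply]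
      rw [hQapp, hPB]
    have hQP : Q.comp P = P := by
      ext x
      simp only [ContinuousLinearMap.comp_apply]
      have hPx : P x = B (C (S x)) := by rw [hPapp x, hBC]; rfl
      rw [hQapp, hPx, hSBB]
    have hPR : P.comp R = P := by
      ext x
      simp only [ContinuousLinearMap.comp_apply]
      rw [hRapp, hPapp' (SC (C x))]
      have hT1 : T (SC (C x)) = B (C (SC (C x))) := by rw [hBC]; rfl
      have hT2 : T x = B (C x) := by rw [hBC]; rfl
      rw [hT1, hCSC, ← hT2]
      exact (hPapp' x).symm
    have hRP : R.comp P = R := by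
      ext x
      simp only [ContinuousLinearMap.comp_apply]
      rw [hRapp, hRapp, hCP]
    -- hermitian data
    have hermE' : IsHermitianWt E P := hermE
    have hermH' : IsHermitianWt H P := by
      rw [hcomm]
      exact hermH
    have hermEQ : IsHermitianWt E Q := hSB.2.2.1
    have hermHR : IsHermitianWt H R := hSC.2.2.2
    -- apply the algebra lemma in L(X)
    have hmul : ∀ a b : X →L[ℂ] X, a * b = a.comp b := fun _ _ => rfl
    have hPQ' : P = Q := by
      apply WEPAux.herm_idem_eq (u := E)
        (by rw [hmul, hPP]) (by rw [hmul, hQQ])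
        (Or.inl ⟨by rw [hmul, hPQ], by rw [hmul, hQP]⟩) hermE' hermEQ
    have hPR' : P = R := by
      apply WEPAux.herm_idem_eq (u := H)
        (by rw [hmul, hPP]) (by rw [hmul, hRR])
        (Or.inr ⟨by rw [hmul, hPR], by rw [hmul, hRP]⟩) hermH' hermHR
    rw [← hPQ', hPR']
  -- (ii) ↔ (iii)
  have h23 : Q = R ↔
      (Set.range ⇑B = Set.range ⇑SC ∧ LinearMap.ker (SB : X →ₗ[ℂ] Y) = LinearMap.ker (C : X →ₗ[ℂ] Y)) := by
    constructor
    · intro hQR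
      constructor
      · apply Set.Subset.antisymm
        · rintro _ ⟨y, rfl⟩
          have h1 : B y = Q (B y) := by rw [hQapp, hSBB]
          rw [h1, hQR, hRapp]
          exact ⟨C (B y), rfl⟩
        · rintro _ ⟨z, rfl⟩
          have h1 : SC z = R (SC z) := by rw [hRapp, hCSC]
          rw [h1, ← hQR, hQapp]
          exact ⟨SB (SC z), rfl⟩
      · ext x
        simp only [LinearMap.mem_ker, ContinuousLinearMap.coe_coe]
        constructor
        · intro hx
          have h1 : Q x = 0 := by rw [hQapp, hx, map_zero]
          rw [hQR, hRapp] at h1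
          have h2 : C (SC (C x)) = C 0 := by rw [h1]
          rwa [hCSC, map_zero] at h2
        · intro hx
          have h1 : R x = 0 := by rw [hRapp, hx, map_zero]
          rw [← hQR, hQapp] at h1
          apply hB
          rw [map_zero]
          exact h1
    · rintro ⟨hrange, hker⟩
      ext x
      rw [hQapp, hRapp]
      -- B (SB x) is in range SC
      have h1 : B (SB x) ∈ Set.range ⇑SC := by
        rw [← hrange]; exact ⟨SB x, rfl⟩
      obtain ⟨z, hz⟩ := h1
      have hfix : SC (C (B (SB x))) = B (SB x) := by
        rw [← hz, hCSC]
      have h2 : SB (x - B (SB x)) = 0 := by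
        rw [map_sub, hSBB, sub_self]
      have h3 : (x - B (SB x)) ∈ LinearMap.ker (SB : X →ₗ[ℂ] Y) := by
        simpa [LinearMap.mem_ker] using h2
      rw [hker] at h3
      have h4 : C (x - B (SB x)) = 0 := by
        simpa [LinearMap.mem_ker] using h3
      rw [map_sub, sub_eq_zero] at h4
      rw [← hfix, ← h4]
  constructor
  · exact ⟨h12, h21⟩
  · exact Iff.trans ⟨h12, h21⟩ h23
end
end

section
/- Let X and Y be complex Banach spaces, let E, H ∈ L(X) and F ∈ L(Y) be invertible positive operators, let T ∈ L(X) be such that T^†_{E,H} exists, and suppose T = B C with C ∈ L(X,Y) surjective and B ∈ L(Y,X) injective (so that B^†_{E,F} and C^†_{F,H} exist). Then the following are equivalent: (i) T is weighted EP with weights E and H; (ii) (I_X − C^†_{F,H} C) B = 0 and C (I_X − B B^†_{E,F}) = 0; (iii) B^†_{E,F} (I_X − C^†_{F,H} C) = 0 and (I_X − B B^†_{E,F}) C^†_{F,H} = 0. -/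
/-!
Common definitions: hermitian and positive elements of a complex unital Banach
algebra, hermitian elements with respect to the equivalent norm induced by an
invertible positive element (weight), and the weighted Moore–Penrose inverse,
both for Banach algebra elements and for bounded linear operators between
Banach spaces.
-/

noncomputable section

set_option maxHeartbeats 1000000

/-! ### Auxiliary lemmas -/

lemma aux_pow_idem {A : Type*} [Monoid A] {p : A} (hp : p * p = p) :
    ∀ n : ℕ, p ^ (n + 1) = p := by
  intro n
  induction n with
  | zero => simp
  | succ k ih => rw [pow_succ, ih, hp]

lemma aux_exp_idem {A : Type*} [NormedRing A] [NormedAlgebra ℂ A] [CompleteSpace A]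
    {p : A} (hp : p * p = p) (z : ℂ) :
    NormedSpace.exp (z • p) = 1 + (Complex.exp z - 1) • p := by
  have hc : Summable fun n : ℕ => ((n.factorial : ℂ)⁻¹ * z ^ n) := by
    simpa [smul_eq_mul] using NormedSpace.expSeries_summable' (𝕂 := ℂ) (𝔸 := ℂ) z
  have hc1 : Summable fun n : ℕ => (((n + 1).factorial : ℂ)⁻¹ * z ^ (n + 1)) :=
    (summable_nat_add_iff 1).mpr hc
  have hez : Complex.exp z = 1 + ∑' n : ℕ, (((n + 1).factorial : ℂ)⁻¹ * z ^ (n + 1)) := by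
    have h0 := Summable.tsum_eq_zero_add hc
    have : Complex.exp z = ∑' n : ℕ, ((n.factorial : ℂ)⁻¹ * z ^ n) := by
      rw [Complex.exp_eq_exp_ℂ, NormedSpace.exp_eq_tsum ℂ]
      simp [smul_eq_mul]
    rw [this, h0]; simp
  have hsum := NormedSpace.expSeries_summable' (𝕂 := ℂ) (z • p)
  rw [NormedSpace.exp_eq_tsum ℂ]
  simp only []
  rw [Summable.tsum_eq_zero_add hsum]
  have hfn : ∀ n : ℕ, (((n+1).factorial : ℂ))⁻¹ • (z • p) ^ (n + 1)
      = (((n+1).factorial : ℂ)⁻¹ * z ^ (n + 1)) • p := by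
    intro n
    rw [smul_pow, aux_pow_idem hp, smul_smul]
  simp only [hfn]
  rw [Summable.tsum_smul_const hc1]
  have hterm : (∑' n : ℕ, (((n + 1).factorial : ℂ)⁻¹ * z ^ (n + 1))) = Complex.exp z - 1 := by
    rw [hez]; ring
  rw [hterm]
  simp

open Bornology Filter in
lemma aux_sqrt_unique {A : Type*} [NormedRing A] [NormedAlgebra ℂ A] [CompleteSpace A]
    (s r : Aˣ)
    (hs : spectrum ℂ (s : A) ⊆ Complex.ofReal '' Set.Ici (0 : ℝ))
    (hr : spectrum ℂ (r : A) ⊆ Complex.ofReal '' Set.Ici (0 : ℝ))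
    (hsq : (s : A) * s = (r : A) * r) : (s : A) = r := by
  classical
  set d : A := (s : A) - r with hd
  have h0 : (s : A) * d + d * r = 0 := by
    rw [hd, mul_sub, sub_mul, hsq]; abel
  have key : ∀ z : ℂ, (algebraMap ℂ A z - s) * d = d * (algebraMap ℂ A z + r) := by
    intro z
    have hcz : algebraMap ℂ A z * d = d * algebraMap ℂ A z := Algebra.commutes z d
    rw [sub_mul, mul_add, hcz, eq_neg_of_add_eq_zero_left h0]
    abel
  have hz_s : ∀ z : ℂ, z ∈ spectrum ℂ (s : A) → 0 < z.re ∧ z.im = 0 := by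
    intro z hz
    obtain ⟨x, hx, rfl⟩ := hs hz
    have h0s : (0 : ℂ) ∉ spectrum ℂ (s : A) := spectrum.zero_notMem ℂ s.isUnit
    have hxne : x ≠ 0 := by
      rintro rfl
      exact h0s (by simpa using hz)
    refine ⟨?_, by simp⟩
    simpa using lt_of_le_of_ne hx (Ne.symm hxne)
  have hdisj : ∀ z : ℂ, z ∈ spectrum ℂ (s : A) → IsUnit (algebraMap ℂ A z + r) := by
    intro z hz
    have h1 : (-z) ∉ spectrum ℂ (r : A) := by
      intro hmem
      obtain ⟨y, hy, hye⟩ := hr hmem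
      have hre := (hz_s z hz).1
      have : y = -z.re := by
        have := congrArg Complex.re hye
        simpa using this
      have hy' : (0:ℝ) ≤ y := hy
      linarith
    have h2 : IsUnit (algebraMap ℂ A (-z) - r) := spectrum.notMem_iff.mp h1
    have h3 : algebraMap ℂ A (-z) - (r : A) = -(algebraMap ℂ A z + r) := by
      rw [map_neg]; abel
    rw [h3] at h2
    simpa using h2.neg
  have hrs : ∀ z : ℂ, z ∈ spectrum ℂ (s : A) → z ∈ resolventSet ℂ (-(r : A) : A) := by
    intro z hz
    rw [spectrum.mem_resolventSet_iff, sub_neg_eq_add]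
    exact hdisj z hz
  set f : ℂ → A := fun z => resolvent (s : A) z * d with hf
  set g : ℂ → A := fun z => d * resolvent (-(r : A) : A) z with hg
  have hagree : ∀ z : ℂ, z ∉ spectrum ℂ (s : A) → z ∈ resolventSet ℂ (-(r : A) : A) →
      f z = g z := by
    intro z hz1 hz2
    have h₁ : IsUnit (algebraMap ℂ A z - s) := spectrum.notMem_iff.mp hz1
    have h₂ : IsUnit (algebraMap ℂ A z + r) := by
      have := spectrum.mem_resolventSet_iff.mp hz2
      simpa [sub_neg_eq_add] using this
    have e2 : resolvent (-(r : A) : A) z = Ring.inverse (algebraMap ℂ A z + r) := by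
      rw [resolvent, sub_neg_eq_add]
    have h2c := Ring.mul_inverse_cancel _ h₂
    have h1c := Ring.inverse_mul_cancel _ h₁
    show resolvent (s : A) z * d = d * resolvent (-(r : A) : A) z
    rw [e2, resolvent]
    calc Ring.inverse (algebraMap ℂ A z - (s : A)) * d
        = Ring.inverse (algebraMap ℂ A z - (s : A)) * d
            * ((algebraMap ℂ A z + r) * Ring.inverse (algebraMap ℂ A z + r)) := by
          rw [h2c, mul_one]
      _ = Ring.inverse (algebraMap ℂ A z - (s : A)) * (d * (algebraMap ℂ A z + r))
            * Ring.inverse (algebraMap ℂ A z + r) := by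
          rw [mul_assoc, mul_assoc, mul_assoc]
      _ = Ring.inverse (algebraMap ℂ A z - (s : A)) * ((algebraMap ℂ A z - (s : A)) * d)
            * Ring.inverse (algebraMap ℂ A z + r) := by rw [key z]
      _ = d * Ring.inverse (algebraMap ℂ A z + r) := by
          rw [← mul_assoc, h1c, one_mul]
  set h : ℂ → A := fun z => if z ∈ spectrum ℂ (s : A) then g z else f z with hh
  have hdiff : Differentiable ℂ h := by
    intro z₀
    by_cases hz₀ : z₀ ∈ spectrum ℂ (s : A)
    · have hz₀' : z₀ ∈ resolventSet ℂ (-(r : A) : A) := hrs z₀ hz₀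
      have hgdiff : DifferentiableAt ℂ g z₀ :=
        ((spectrum.hasDerivAt_resolvent hz₀').differentiableAt).const_mul d
      refine hgdiff.congr_of_eventuallyEq ?_
      filter_upwards [(spectrum.isOpen_resolventSet (-(r : A) : A)).mem_nhds hz₀'] with z hz
      by_cases hzs : z ∈ spectrum ℂ (s : A)
      · simp [hh, hzs]
      · simpa [hh, hzs] using hagree z hzs hz
    · have hz₀' : z₀ ∈ resolventSet ℂ (s : A) :=
        spectrum.mem_resolventSet_iff.mpr (spectrum.notMem_iff.mp hz₀)
      have hfdiff : DifferentiableAt ℂ f z₀ :=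
        ((spectrum.hasDerivAt_resolvent hz₀').differentiableAt).mul_const d
      refine hfdiff.congr_of_eventuallyEq ?_
      filter_upwards [(spectrum.isOpen_resolventSet (s : A)).mem_nhds hz₀'] with z hz
      have hzs : z ∉ spectrum ℂ (s : A) :=
        spectrum.notMem_iff.mpr (spectrum.mem_resolventSet_iff.mp hz)
      simp [hh, hzs]
  have htend : Tendsto h (cobounded ℂ) (nhds 0) := by
    have t1 : Tendsto (fun z => ‖resolvent (s : A) z‖) (cobounded ℂ) (nhds 0) := by
      simpa using (spectrum.resolvent_tendsto_cobounded (𝕜 := ℂ) ((s : A))).norm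
    have t2 : Tendsto (fun z => ‖resolvent (-(r : A) : A) z‖) (cobounded ℂ) (nhds 0) := by
      simpa using (spectrum.resolvent_tendsto_cobounded (𝕜 := ℂ) ((-(r : A) : A))).norm
    have hfs : Tendsto (fun z => ‖resolvent (s : A) z‖ * ‖d‖ + ‖d‖ * ‖resolvent (-(r : A) : A) z‖)
        (cobounded ℂ) (nhds 0) := by
      simpa using (t1.mul_const ‖d‖).add (t2.const_mul ‖d‖)
    refine squeeze_zero_norm ?_ hfs
    intro z
    by_cases hz : z ∈ spectrum ℂ (s : A)
    · simp only [hh, hz, if_true]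
      calc ‖d * resolvent (-(r : A) : A) z‖ ≤ ‖d‖ * ‖resolvent (-(r : A) : A) z‖ := norm_mul_le _ _
        _ ≤ _ := le_add_of_nonneg_left (by positivity)
    · simp only [hh, hz, if_false]
      calc ‖resolvent (s : A) z * d‖ ≤ ‖resolvent (s : A) z‖ * ‖d‖ := norm_mul_le _ _
        _ ≤ _ := le_add_of_nonneg_right (by positivity)
  have hbd : IsBounded (Set.range h) := by
    have hev : ∀ᶠ z in cobounded ℂ, ‖h z‖ < 1 := by
      have hn : Tendsto (fun z => ‖h z‖) (cobounded ℂ) (nhds 0) := by simpa using htend.norm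
      exact hn.eventually_lt_const one_pos
    rw [Filter.atTop_basis_Ioi.cobounded_of_norm.eventually_iff] at hev
    obtain ⟨R, -, hR⟩ := hev
    obtain ⟨Cb, hCb⟩ := (isCompact_closedBall (0 : ℂ) R).exists_bound_of_continuousOn
      hdiff.continuous.continuousOn
    rw [isBounded_iff_forall_norm_le]
    refine ⟨max Cb 1, ?_⟩
    rintro x ⟨z, rfl⟩
    by_cases hz : ‖z‖ ≤ R
    · exact le_max_of_le_left (hCb z (by simpa [Metric.mem_closedBall, dist_zero_right] using hz))
    · exact le_max_of_le_right
        (le_of_lt (hR (show z ∈ norm ⁻¹' Set.Ioi R by simpa using lt_of_not_ge hz)))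
  have hconst := hdiff.apply_eq_apply_of_bounded hbd
  have hzero : ∀ z : ℂ, h z = 0 := by
    intro z
    have heq : h = fun _ => h z := funext fun w => hconst w z
    have ht2 : Tendsto h (cobounded ℂ) (nhds (h z)) := by
      rw [heq]; exact tendsto_const_nhds
    exact tendsto_nhds_unique ht2 htend
  have hm1 : (-1 : ℂ) ∉ spectrum ℂ (s : A) := by
    intro hc
    have := (hz_s _ hc).1
    norm_num at this
  have h₁ : IsUnit (algebraMap ℂ A (-1) - s) := spectrum.notMem_iff.mp hm1
  have hinv : resolvent (s : A) (-1 : ℂ) * d = 0 := by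
    have hz := hzero (-1)
    simp only [hh, hm1, if_false] at hz
    simpa [hf] using hz
  have hd0 : d = 0 := by
    have h2 : (algebraMap ℂ A (-1) - (s : A)) * (resolvent (s : A) (-1 : ℂ) * d) = 0 := by
      rw [hinv, mul_zero]
    rwa [resolvent, ← mul_assoc, Ring.mul_inverse_cancel _ h₁, one_mul] at h2
  rw [hd] at hd0
  exact sub_eq_zero.mp hd0

section herm
variable {A : Type*} [NormedRing A] [NormedAlgebra ℂ A] [CompleteSpace A]

lemma aux_exp_coeff_pi : Complex.exp (Complex.I * ((Real.pi : ℝ) : ℂ)) - 1 = -2 := by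
  rw [mul_comm, Complex.exp_pi_mul_I]; norm_num

lemma aux_exp_coeff_npi : Complex.exp (Complex.I * ((-Real.pi : ℝ) : ℂ)) - 1 = -2 := by
  push_cast
  rw [mul_neg, mul_comm, Complex.exp_neg, Complex.exp_pi_mul_I]
  norm_num

lemma aux_conj_mul {M : Type*} [Monoid M] (s : Mˣ) (x y : M) :
    ((s : M) * x * ((s⁻¹ : Mˣ) : M)) * ((s : M) * y * ((s⁻¹ : Mˣ) : M))
      = (s : M) * (x * y) * ((s⁻¹ : Mˣ) : M) := by
  simp only [mul_assoc, Units.inv_mul_cancel_left]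

lemma aux_herm_idem_range {u p q : A}
    (hp : IsHermitianWt u p) (hq : IsHermitianWt u q)
    (hpp : p * p = p) (hqq : q * q = q) (hpq : p * q = q) (hqp : q * p = p) : p = q := by
  obtain ⟨s, hspos, hssq, hsn⟩ := hp
  obtain ⟨r, hrpos, hrsq, hrn⟩ := hq
  have hsr : s = r := by
    refine Units.ext (aux_sqrt_unique s r hspos.2 hrpos.2 ?_)
    rw [← sq, ← sq, hssq, hrsq]
  subst hsr
  set δ : A := p - q with hδ
  have hδ2 : δ * δ = 0 := by
    rw [hδ, sub_mul, mul_sub, mul_sub, hpp, hpq, hqp, hqq]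
    abel
  have hexp_p : NormedSpace.exp ((Complex.I * ((Real.pi : ℝ) : ℂ)) • p)
      = 1 - (2 : ℂ) • p := by
    rw [aux_exp_idem hpp, aux_exp_coeff_pi]
    module
  have hexp_q : NormedSpace.exp ((Complex.I * ((-Real.pi : ℝ) : ℂ)) • q)
      = 1 - (2 : ℂ) • q := by
    rw [aux_exp_idem hqq, aux_exp_coeff_npi]
    module
  have hprod : (1 - (2 : ℂ) • p) * (1 - (2 : ℂ) • q) = 1 - (2 : ℂ) • δ := by
    rw [sub_mul, one_mul, mul_sub, mul_one, smul_mul_assoc, mul_smul_comm, hpq, smul_smul, hδ]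
    module
  have hM1 : ‖(s : A) * (1 - (2 : ℂ) • δ) * ((s⁻¹ : Aˣ) : A)‖ ≤ 1 := by
    have e1 : (s : A) * (1 - (2 : ℂ) • δ) * ((s⁻¹ : Aˣ) : A)
        = ((s : A) * (1 - (2 : ℂ) • p) * ((s⁻¹ : Aˣ) : A))
          * ((s : A) * (1 - (2 : ℂ) • q) * ((s⁻¹ : Aˣ) : A)) := by
      rw [aux_conj_mul, hprod]
    rw [e1]
    have n1 : ‖(s : A) * (1 - (2 : ℂ) • p) * ((s⁻¹ : Aˣ) : A)‖ = 1 := by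
      have := hsn Real.pi
      rwa [hexp_p] at this
    have n2 : ‖(s : A) * (1 - (2 : ℂ) • q) * ((s⁻¹ : Aˣ) : A)‖ = 1 := by
      have := hrn (-Real.pi)
      rwa [hexp_q] at this
    calc ‖((s : A) * (1 - (2 : ℂ) • p) * ((s⁻¹ : Aˣ) : A))
          * ((s : A) * (1 - (2 : ℂ) • q) * ((s⁻¹ : Aˣ) : A))‖
        ≤ ‖(s : A) * (1 - (2 : ℂ) • p) * ((s⁻¹ : Aˣ) : A)‖
          * ‖(s : A) * (1 - (2 : ℂ) • q) * ((s⁻¹ : Aˣ) : A)‖ := norm_mul_le _ _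
      _ ≤ 1 := by rw [n1, n2]; norm_num
  have hpow : ∀ n : ℕ, (1 - (2 : ℂ) • δ) ^ (n + 1) = 1 - ((2 : ℂ) * (n + 1)) • δ := by
    intro n
    induction n with
    | zero => rw [pow_one]; push_cast; module
    | succ k ih =>
      rw [pow_succ, ih]
      rw [sub_mul, one_mul, mul_sub, mul_one, smul_mul_assoc, mul_smul_comm, hδ2, smul_smul,
        smul_zero]
      push_cast
      module
  have hconj : ∀ n : ℕ, ((s : A) * (1 - (2 : ℂ) • δ) * ((s⁻¹ : Aˣ) : A)) ^ (n + 1)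
      = 1 - ((2 : ℂ) * (n + 1)) • ((s : A) * δ * ((s⁻¹ : Aˣ) : A)) := by
    intro n
    rw [Units.conj_pow, hpow n, mul_sub, sub_mul, mul_one, mul_smul_comm, smul_mul_assoc,
      s.mul_inv, mul_assoc]
  have hbound : ∀ n : ℕ, ((2 : ℝ) * (n + 1)) * ‖(s : A) * δ * ((s⁻¹ : Aˣ) : A)‖
      ≤ 1 + ‖(1 : A)‖ := by
    intro n
    have h1 : ‖((s : A) * (1 - (2 : ℂ) • δ) * ((s⁻¹ : Aˣ) : A)) ^ (n + 1)‖ ≤ 1 := by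
      calc ‖((s : A) * (1 - (2 : ℂ) • δ) * ((s⁻¹ : Aˣ) : A)) ^ (n + 1)‖
          ≤ ‖(s : A) * (1 - (2 : ℂ) • δ) * ((s⁻¹ : Aˣ) : A)‖ ^ (n + 1) :=
            norm_pow_le' _ (Nat.succ_pos n)
        _ ≤ 1 := pow_le_one₀ (norm_nonneg _) hM1
    rw [hconj n] at h1
    have h2 : ‖((2 : ℂ) * (n + 1)) • ((s : A) * δ * ((s⁻¹ : Aˣ) : A))‖
        ≤ ‖(1 : A)‖ + 1 := by
      calc ‖((2 : ℂ) * (n + 1)) • ((s : A) * δ * ((s⁻¹ : Aˣ) : A))‖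
          = ‖(1 : A) - (1 - ((2 : ℂ) * (n + 1)) • ((s : A) * δ * ((s⁻¹ : Aˣ) : A)))‖ := by
            congr 1; abel
        _ ≤ ‖(1 : A)‖ + ‖(1 - ((2 : ℂ) * (n + 1)) • ((s : A) * δ * ((s⁻¹ : Aˣ) : A)))‖ :=
            norm_sub_le _ _
        _ ≤ ‖(1 : A)‖ + 1 := by linarith
    rw [norm_smul] at h2
    have h3 : ‖((2 : ℂ) * ((n : ℂ) + 1))‖ = 2 * ((n : ℝ) + 1) := by
      rw [show ((2 : ℂ) * ((n : ℂ) + 1)) = (((2 * (n + 1) : ℕ)) : ℂ) by push_cast; ring]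
      rw [Complex.norm_natCast]
      push_cast
      ring
    rw [h3] at h2
    linarith
  have hsd0 : (s : A) * δ * ((s⁻¹ : Aˣ) : A) = 0 := by
    by_contra hne
    have hpos : 0 < ‖(s : A) * δ * ((s⁻¹ : Aˣ) : A)‖ := norm_pos_iff.mpr hne
    obtain ⟨n, hn⟩ := exists_nat_gt ((1 + ‖(1 : A)‖) / (2 * ‖(s : A) * δ * ((s⁻¹ : Aˣ) : A)‖))
    have := hbound n
    rw [div_lt_iff₀ (by positivity)] at hn
    have hn' : (n : ℝ) ≤ n + 1 := by linarith
    nlinarith [hpos]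
  have hδ0 : δ = 0 := by
    have h2 : (s : A) * δ = 0 := by
      have := congrArg (fun x => x * (s : A)) hsd0
      simpa [mul_assoc, s.inv_mul] using this
    have := congrArg (fun x => ((s⁻¹ : Aˣ) : A) * x) h2
    simpa [← mul_assoc, s.inv_mul] using this
  rw [hδ] at hδ0
  exact sub_eq_zero.mp hδ0

lemma aux_herm_one_sub {u p : A} (hpp : p * p = p) (h : IsHermitianWt u p) :
    IsHermitianWt u (1 - p) := by
  obtain ⟨s, hpos, hsq, hn⟩ := h
  refine ⟨s, hpos, hsq, fun t => ?_⟩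
  have h1p : (1 - p) * (1 - p) = 1 - p := by
    rw [sub_mul, one_mul, mul_sub, mul_one, hpp]
    abel
  rw [aux_exp_idem h1p]
  have hkey : (1 : A) + (Complex.exp (Complex.I * (t : ℂ)) - 1) • (1 - p)
      = Complex.exp (Complex.I * (t : ℂ))
        • ((1 : A) + (Complex.exp (Complex.I * ((-t : ℝ) : ℂ)) - 1) • p) := by
    have he : Complex.exp (Complex.I * (t : ℂ))
        * Complex.exp (Complex.I * ((-t : ℝ) : ℂ)) = 1 := by
      rw [← Complex.exp_add]
      push_cast
      ring_nf
      exact Complex.exp_zero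
    rw [smul_add, smul_smul, mul_sub, he, mul_one]
    module
  rw [hkey, mul_smul_comm, smul_mul_assoc, norm_smul]
  have habs : ‖Complex.exp (Complex.I * (t : ℂ))‖ = 1 := by
    rw [Complex.norm_exp]
    simp
  rw [habs, one_mul, ← aux_exp_idem hpp]
  exact hn (-t)

lemma aux_herm_idem_ker {u p q : A}
    (hp : IsHermitianWt u p) (hq : IsHermitianWt u q)
    (hpp : p * p = p) (hqq : q * q = q) (hpq : p * q = p) (hqp : q * p = q) : p = q := by
  have h1p : (1 - p) * (1 - p) = 1 - p := by
    rw [sub_mul, one_mul, mul_sub, mul_one, hpp]; abel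
  have h1q : (1 - q) * (1 - q) = 1 - q := by
    rw [sub_mul, one_mul, mul_sub, mul_one, hqq]; abel
  have h1pq : (1 - p) * (1 - q) = 1 - q := by
    rw [sub_mul, one_mul, mul_sub, mul_one, hpq]; abel
  have h1qp : (1 - q) * (1 - p) = 1 - p := by
    rw [sub_mul, one_mul, mul_sub, mul_one, hqp]; abel
  have h := aux_herm_idem_range (aux_herm_one_sub hpp hp) (aux_herm_one_sub hqq hq)
    h1p h1q h1pq h1qp
  have h2 := congrArg (fun x => (1 : A) - x) h
  simpa using h2

end herm

/-- For `T = B C` as above, `T` is weighted EP with weights `E` and `H` iff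
`(I_X − C^†_{F,H} C) B = 0` and `C (I_X − B B^†_{E,F}) = 0`, iff
`B^†_{E,F} (I_X − C^†_{F,H} C) = 0` and `(I_X − B B^†_{E,F}) C^†_{F,H} = 0`. -/
theorem factorization_BC_weighted_EP_iff_annihilation
    {X Y : Type*} [NormedAddCommGroup X] [NormedSpace ℂ X] [CompleteSpace X]
    [NormedAddCommGroup Y] [NormedSpace ℂ Y] [CompleteSpace Y]
    (E H : X →L[ℂ] X) (F : Y →L[ℂ] Y)
    (hE : IsPositiveEl E ∧ IsUnit E) (hH : IsPositiveEl H ∧ IsUnit H)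
    (hF : IsPositiveEl F ∧ IsUnit F)
    (T : X →L[ℂ] X) (C : X →L[ℂ] Y) (B : Y →L[ℂ] X)
    (hC : Function.Surjective C) (hB : Function.Injective B)
    (hBC : T = B.comp C)
    (ST : X →L[ℂ] X) (hST : IsWMPIop E H T ST)
    (SB : X →L[ℂ] Y) (hSB : IsWMPIop E F B SB)
    (SC : Y →L[ℂ] X) (hSC : IsWMPIop F H C SC) :
    (IsWEPop E H T ↔
      ((ContinuousLinearMap.id ℂ X - SC.comp C).comp B = 0 ∧
        C.comp (ContinuousLinearMap.id ℂ X - B.comp SB) = 0)) ∧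
    (IsWEPop E H T ↔
      (SB.comp (ContinuousLinearMap.id ℂ X - SC.comp C) = 0 ∧
        (ContinuousLinearMap.id ℂ X - B.comp SB).comp SC = 0)) := by
  classical
  subst hBC
  have hSBB : ∀ y, SB (B y) = y := by
    intro y
    apply hB
    have := congrArg (fun f : Y →L[ℂ] X => f y) hSB.1
    simpa using this
  have hCSC : ∀ y, C (SC y) = y := by
    intro y
    obtain ⟨x, rfl⟩ := hC y
    have := congrArg (fun f : X →L[ℂ] Y => f x) hSC.1
    simpa using this
  have wep_of_ii : ((ContinuousLinearMap.id ℂ X - SC.comp C).comp B = 0 ∧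
      C.comp (ContinuousLinearMap.id ℂ X - B.comp SB) = 0) → IsWEPop E H (B.comp C) := by
    rintro ⟨h1, h2⟩
    have hPB : ∀ y, SC (C (B y)) = B y := by
      intro y
      have := congrArg (fun f : Y →L[ℂ] X => f y) h1
      simp only [ContinuousLinearMap.comp_apply, ContinuousLinearMap.sub_apply,
        ContinuousLinearMap.coe_id', id_eq, ContinuousLinearMap.zero_apply] at this
      exact (sub_eq_zero.mp this).symm
    have hCQ : ∀ x, C (B (SB x)) = C x := by
      intro x
      have := congrArg (fun f : X →L[ℂ] Y => f x) h2
      simp only [ContinuousLinearMap.comp_apply, ContinuousLinearMap.sub_apply,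
        ContinuousLinearMap.coe_id', id_eq, ContinuousLinearMap.zero_apply, map_sub] at this
      exact (sub_eq_zero.mp this).symm
    have hPQ : ∀ x, SC (C x) = B (SB x) := by
      intro x
      rw [← hCQ x]
      exact hPB (SB x)
    refine ⟨SC.comp SB, ⟨?_, ?_, ?_, ?_⟩, ?_⟩
    · ext x
      simp only [ContinuousLinearMap.comp_apply]
      rw [hSBB, hCSC]
    · ext x
      simp only [ContinuousLinearMap.comp_apply]
      rw [hSBB, hCSC]
    · have e : (B.comp C).comp (SC.comp SB) = B.comp SB := by
        ext x
        simp only [ContinuousLinearMap.comp_apply]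
        rw [hCSC]
      rw [e]; exact hSB.2.2.1
    · have e : (SC.comp SB).comp (B.comp C) = SC.comp C := by
        ext x
        simp only [ContinuousLinearMap.comp_apply]
        rw [hSBB]
      rw [e]; exact hSC.2.2.2
    · ext x
      simp only [ContinuousLinearMap.comp_apply]
      rw [hCSC, hSBB, hPQ]
  have ii_of_wep : IsWEPop E H (B.comp C) →
      ((ContinuousLinearMap.id ℂ X - SC.comp C).comp B = 0 ∧
        C.comp (ContinuousLinearMap.id ℂ X - B.comp SB) = 0) := by
    rintro ⟨S, ⟨hT1, hT2, hTE, hTH⟩, hcomm⟩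
    have hTST : ∀ x, B (C (S (B (C x)))) = B (C x) := by
      intro x
      have := congrArg (fun f : X →L[ℂ] X => f x) hT1
      simpa using this
    have hc : ∀ x, B (C (S x)) = S (B (C x)) := by
      intro x
      have := congrArg (fun f : X →L[ℂ] X => f x) hcomm
      simpa using this
    have hCSB : ∀ y, C (S (B y)) = y := by
      intro y
      obtain ⟨x, rfl⟩ := hC y
      exact hB (hTST x)
    have hRB : ∀ y, B (C (S (B y))) = B y := by
      intro y; rw [hCSB y]
    have hRR : ((B.comp C).comp S) * ((B.comp C).comp S) = (B.comp C).comp S := by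
      ext x
      show B (C (S (B (C (S x))))) = B (C (S x))
      exact hTST (S x)
    have hQQ : (B.comp SB) * (B.comp SB) = B.comp SB := by
      ext x
      show B (SB (B (SB x))) = B (SB x)
      rw [hSBB (SB x)]
    have hRQ : ((B.comp C).comp S) * (B.comp SB) = B.comp SB := by
      ext x
      show B (C (S (B (SB x)))) = B (SB x)
      exact hRB (SB x)
    have hQR : (B.comp SB) * ((B.comp C).comp S) = (B.comp C).comp S := by
      ext x
      show B (SB (B (C (S x)))) = B (C (S x))
      rw [hSBB (C (S x))]
    have hRQeq : (B.comp C).comp S = B.comp SB :=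
      aux_herm_idem_range hTE hSB.2.2.1 hRR hQQ hRQ hQR
    have hTH' : IsHermitianWt H ((B.comp C).comp S) := by
      rw [hcomm]; exact hTH
    have hPP : (SC.comp C) * (SC.comp C) = SC.comp C := by
      ext x
      show SC (C (SC (C x))) = SC (C x)
      rw [hCSC (C x)]
    have hRP : ((B.comp C).comp S) * (SC.comp C) = (B.comp C).comp S := by
      ext x
      show B (C (S (SC (C x)))) = B (C (S x))
      rw [hc (SC (C x)), hCSC (C x), ← hc x]
    have hPR : (SC.comp C) * ((B.comp C).comp S) = SC.comp C := by
      ext x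
      show SC (C (B (C (S x)))) = SC (C x)
      rw [hc x, hCSB (C x)]
    have hRPeq : (B.comp C).comp S = SC.comp C :=
      aux_herm_idem_ker hTH' hSC.2.2.2 hRR hPP hRP hPR
    constructor
    · ext y
      have e : SC (C (B y)) = B y := by
        have h1 := congrArg (fun f : X →L[ℂ] X => f (B y)) hRPeq
        simp only [ContinuousLinearMap.comp_apply] at h1
        rw [← h1]
        exact hRB y
      simp [ContinuousLinearMap.sub_apply, ContinuousLinearMap.comp_apply, e]
    · ext x
      have e : C (B (SB x)) = C x := by
        have h1 := congrArg (fun f : X →L[ℂ] X => f x) hRQeq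
        simp only [ContinuousLinearMap.comp_apply] at h1
        rw [← h1, hc x]
        exact hCSB (C x)
      simp [ContinuousLinearMap.sub_apply, ContinuousLinearMap.comp_apply, map_sub, e]
  have iii_of_ii : ((ContinuousLinearMap.id ℂ X - SC.comp C).comp B = 0 ∧
      C.comp (ContinuousLinearMap.id ℂ X - B.comp SB) = 0) →
      (SB.comp (ContinuousLinearMap.id ℂ X - SC.comp C) = 0 ∧
        (ContinuousLinearMap.id ℂ X - B.comp SB).comp SC = 0) := by
    rintro ⟨h1, h2⟩
    have hPB : ∀ y, SC (C (B y)) = B y := by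
      intro y
      have := congrArg (fun f : Y →L[ℂ] X => f y) h1
      simp only [ContinuousLinearMap.comp_apply, ContinuousLinearMap.sub_apply,
        ContinuousLinearMap.coe_id', id_eq, ContinuousLinearMap.zero_apply] at this
      exact (sub_eq_zero.mp this).symm
    have hCQ : ∀ x, C (B (SB x)) = C x := by
      intro x
      have := congrArg (fun f : X →L[ℂ] Y => f x) h2
      simp only [ContinuousLinearMap.comp_apply, ContinuousLinearMap.sub_apply,
        ContinuousLinearMap.coe_id', id_eq, ContinuousLinearMap.zero_apply, map_sub] at this
      exact (sub_eq_zero.mp this).symm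
    have hPQ : ∀ x, SC (C x) = B (SB x) := by
      intro x
      rw [← hCQ x]
      exact hPB (SB x)
    constructor
    · ext x
      simp only [ContinuousLinearMap.comp_apply, ContinuousLinearMap.sub_apply,
        ContinuousLinearMap.coe_id', id_eq, ContinuousLinearMap.zero_apply, map_sub]
      rw [hPQ x, hSBB (SB x), sub_self]
    · ext y
      simp only [ContinuousLinearMap.comp_apply, ContinuousLinearMap.sub_apply,
        ContinuousLinearMap.coe_id', id_eq, ContinuousLinearMap.zero_apply]
      rw [← hPQ (SC y), hCSC y, sub_self]
  have ii_of_iii : (SB.comp (ContinuousLinearMap.id ℂ X - SC.comp C) = 0 ∧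
      (ContinuousLinearMap.id ℂ X - B.comp SB).comp SC = 0) →
      ((ContinuousLinearMap.id ℂ X - SC.comp C).comp B = 0 ∧
        C.comp (ContinuousLinearMap.id ℂ X - B.comp SB) = 0) := by
    rintro ⟨h1, h2⟩
    have hSBP : ∀ x, SB (SC (C x)) = SB x := by
      intro x
      have := congrArg (fun f : X →L[ℂ] Y => f x) h1
      simp only [ContinuousLinearMap.comp_apply, ContinuousLinearMap.sub_apply,
        ContinuousLinearMap.coe_id', id_eq, ContinuousLinearMap.zero_apply, map_sub] at this
      exact (sub_eq_zero.mp this).symm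
    have hQSC : ∀ y, B (SB (SC y)) = SC y := by
      intro y
      have := congrArg (fun f : Y →L[ℂ] X => f y) h2
      simp only [ContinuousLinearMap.comp_apply, ContinuousLinearMap.sub_apply,
        ContinuousLinearMap.coe_id', id_eq, ContinuousLinearMap.zero_apply] at this
      exact (sub_eq_zero.mp this).symm
    have hPQ : ∀ x, SC (C x) = B (SB x) := by
      intro x
      rw [← hQSC (C x), hSBP x]
    constructor
    · ext y
      simp only [ContinuousLinearMap.comp_apply, ContinuousLinearMap.sub_apply,
        ContinuousLinearMap.coe_id', id_eq, ContinuousLinearMap.zero_apply]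
      rw [hPQ (B y), hSBB y, sub_self]
    · ext x
      simp only [ContinuousLinearMap.comp_apply, ContinuousLinearMap.sub_apply,
        ContinuousLinearMap.coe_id', id_eq, ContinuousLinearMap.zero_apply, map_sub]
      rw [← hPQ x, hCSC (C x), sub_self]
  exact ⟨⟨ii_of_wep, wep_of_ii⟩,
    ⟨fun h => iii_of_ii (ii_of_wep h), fun h => wep_of_ii (ii_of_iii h)⟩⟩
end
end

section
/- Let A be a complex unital Banach algebra, let e, f, h ∈ A be invertible positive elements, let a ∈ A be such that a^†_{e,h} exists, and suppose a = b c where b x = 0 implies x = 0 and c A = A (so that b^†_{e,f} and c^†_{f,h} exist). Then the following are equivalent: (i) a is weighted EP with weights e and h; (ii) b b^†_{e,f} = c^†_{f,h} c; (iii) b A = c^†_{f,h} A and {x ∈ A : b^†_{e,f} x = 0} = {x ∈ A : c x = 0}. -/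
/-!
Common definitions: hermitian and positive elements of a complex unital Banach
algebra, hermitian elements with respect to the equivalent norm induced by an
invertible positive element (weight), and the weighted Moore–Penrose inverse,
both for Banach algebra elements and for bounded linear operators between
Banach spaces.
-/

noncomputable section

set_option linter.unusedSectionVars false
set_option linter.unusedVariables false
set_option maxHeartbeats 1000000

open Filter Topology

namespace WEPaux

variable {A : Type*} [NormedRing A] [NormedAlgebra ℂ A] [CompleteSpace A]

lemma exp_idem {p : A} (hp : p * p = p) (z : ℂ) :
    NormedSpace.exp (z • p) = 1 + (Complex.exp z - 1) • p := by
  have hpow : ∀ n : ℕ, p ^ (n + 1) = p := by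
    intro n
    induction n with
    | zero => simp
    | succ k ih => rw [pow_succ, ih, hp]
  have hsum : Summable fun n : ℕ => (n.factorial : ℂ)⁻¹ • (z • p) ^ n :=
    NormedSpace.expSeries_summable' (𝕂 := ℂ) (z • p)
  have hsumz : Summable fun n : ℕ => (n.factorial : ℂ)⁻¹ • z ^ n :=
    NormedSpace.expSeries_summable' (𝕂 := ℂ) z
  have hz : Complex.exp z = ∑' n : ℕ, (n.factorial : ℂ)⁻¹ • z ^ n := by
    rw [Complex.exp_eq_exp_ℂ, NormedSpace.exp_eq_tsum ℂ]
  have hsumz' : Summable fun n : ℕ => ((n + 1).factorial : ℂ)⁻¹ • z ^ (n + 1) :=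
    (summable_nat_add_iff 1).mpr hsumz
  rw [NormedSpace.exp_eq_tsum ℂ]
  show (∑' n : ℕ, (n.factorial : ℂ)⁻¹ • (z • p) ^ n) = _
  rw [Summable.tsum_eq_zero_add hsum]
  have hterm : ∀ n : ℕ, ((n + 1).factorial : ℂ)⁻¹ • (z • p) ^ (n + 1)
      = (((n + 1).factorial : ℂ)⁻¹ * z ^ (n + 1)) • p := by
    intro n
    rw [smul_pow, hpow, smul_smul]
  have hz' : ∑' n : ℕ, (((n + 1).factorial : ℂ)⁻¹ * z ^ (n + 1)) = Complex.exp z - 1 := by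
    rw [hz, Summable.tsum_eq_zero_add hsumz]
    simp [smul_eq_mul]
  calc ((Nat.factorial 0 : ℂ))⁻¹ • (z • p) ^ 0
        + ∑' n : ℕ, ((n + 1).factorial : ℂ)⁻¹ • (z • p) ^ (n + 1)
      = 1 + ∑' n : ℕ, (((n + 1).factorial : ℂ)⁻¹ * z ^ (n + 1)) • p := by
        simp only [hterm]; simp
    _ = 1 + (∑' n : ℕ, (((n + 1).factorial : ℂ)⁻¹ * z ^ (n + 1))) • p := by
        rw [Summable.tsum_smul_const]
        simpa [smul_eq_mul] using hsumz'
    _ = 1 + (Complex.exp z - 1) • p := by rw [hz']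


lemma exp_smul_one (z : ℂ) :
    NormedSpace.exp (z • (1 : A)) = Complex.exp z • (1 : A) := by
  rw [← Algebra.algebraMap_eq_smul_one, ← NormedSpace.algebraMap_exp_comm,
    ← Complex.exp_eq_exp_ℂ, Algebra.algebraMap_eq_smul_one]

lemma isUnit_of_commute_mul {a b : A} (h : Commute a b) (hu : IsUnit (a * b)) : IsUnit a := by
  obtain ⟨u, hu⟩ := hu
  have h1 : a * (b * ↑u⁻¹) = 1 := by
    rw [← mul_assoc, ← hu, u.mul_inv]
  have h2 : (↑u⁻¹ * b) * a = 1 := by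
    rw [mul_assoc, ← h, ← hu, u.inv_mul]
  have h3 : (↑u⁻¹ * b : A) = b * ↑u⁻¹ := by
    calc (↑u⁻¹ * b : A) = (↑u⁻¹ * b) * (a * (b * ↑u⁻¹)) := by rw [h1, mul_one]
      _ = ((↑u⁻¹ * b) * a) * (b * ↑u⁻¹) := by noncomm_ring
      _ = b * ↑u⁻¹ := by rw [h2, one_mul]
  exact ⟨⟨a, b * ↑u⁻¹, h1, by rw [← h3]; exact h2⟩, rfl⟩

lemma exists_factor_exp_neg_sub_one (m : A) :
    ∃ B : A, Commute m B ∧ NormedSpace.exp (-m) - 1 = m * B := by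
  have hsum : Summable fun n : ℕ => (n.factorial : ℂ)⁻¹ • (-m) ^ n :=
    NormedSpace.expSeries_summable' (𝕂 := ℂ) (-m)
  have hsum' : Summable fun n : ℕ => ((n + 1).factorial : ℂ)⁻¹ • (-m) ^ (n + 1) :=
    (summable_nat_add_iff 1).mpr hsum
  have hnorm : Summable fun n : ℕ => ‖(n.factorial : ℂ)⁻¹ • (-m) ^ n‖ :=
    NormedSpace.norm_expSeries_summable' (𝕂 := ℂ) (-m)
  have hS : Summable fun n : ℕ => ((n + 1).factorial : ℂ)⁻¹ • (-m) ^ n := by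
    apply Summable.of_norm
    apply Summable.of_nonneg_of_le (fun n => norm_nonneg _) _ hnorm
    intro n
    rw [norm_smul, norm_smul]
    apply mul_le_mul_of_nonneg_right _ (norm_nonneg _)
    rw [norm_inv, norm_inv]
    apply inv_anti₀
    · simpa using Nat.factorial_pos n
    · simpa using (Nat.cast_le (α := ℝ)).mpr (Nat.factorial_le (Nat.le_succ n))
  refine ⟨-∑' n : ℕ, ((n + 1).factorial : ℂ)⁻¹ • (-m) ^ n, ?_, ?_⟩
  · apply Commute.neg_right
    apply Commute.tsum_right
    intro n
    exact (((Commute.refl m).neg_right).pow_right n).smul_right _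
  · rw [NormedSpace.exp_eq_tsum ℂ]
    show (∑' n : ℕ, (n.factorial : ℂ)⁻¹ • (-m) ^ n) - 1 = _
    rw [Summable.tsum_eq_zero_add hsum]
    have h0 : ((Nat.factorial 0 : ℂ))⁻¹ • (-m) ^ 0 = 1 := by simp
    rw [h0, add_sub_cancel_left]
    rw [mul_neg, ← (hS.tsum_mul_left m), ← tsum_neg]
    congr 1
    ext n
    rw [mul_smul_comm, ← smul_neg]
    congr 1
    rw [pow_succ', neg_mul]


lemma exp_neg_pow_tendsto [Nontrivial A] {x : A}
    (hx : spectrum ℂ x ⊆ Complex.ofReal '' Set.Ici 0) (hu : IsUnit x) :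
    Tendsto (fun N : ℕ => ‖(NormedSpace.exp (-x)) ^ N‖) atTop (𝓝 0) := by
  obtain ⟨ε, hε, hball⟩ : ∃ ε > 0, Metric.ball (0:ℂ) ε ⊆ (spectrum ℂ x)ᶜ :=
    Metric.isOpen_iff.mp (spectrum.isClosed (𝕜 := ℂ) x).isOpen_compl 0
      (spectrum.zero_notMem ℂ hu)
  set M : ℝ := ‖x‖ * ‖(1 : A)‖ with hM
  set δ : ℝ := min ε 1 with hδ
  have hδ0 : 0 < δ := lt_min hε one_pos
  have hδ1 : δ ≤ 1 := min_le_right _ _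
  set c : ℝ := M + 1 with hc
  have hM0 : 0 ≤ M := mul_nonneg (norm_nonneg _) (norm_nonneg _)
  have hc1 : 1 ≤ c := le_add_of_nonneg_left hM0
  have hspec : ∀ lam ∈ spectrum ℂ x, lam.im = 0 ∧ δ ≤ lam.re ∧ lam.re ≤ M := by
    intro lam hlam
    obtain ⟨la, hla0, hlae⟩ := hx hlam
    have hnorm : ‖lam‖ ≤ M := by
      have := spectrum.subset_closedBall_norm_mul (𝕜 := ℂ) x hlam
      simpa [Metric.mem_closedBall, dist_zero_right] using this
    have hout : ε ≤ ‖lam‖ := by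
      by_contra hlt
      push_neg at hlt
      exact (hball (by simpa [Metric.mem_ball, dist_zero_right] using hlt)) hlam
    have hla : lam = ((la : ℝ) : ℂ) := hlae.symm
    have hla0' : (0:ℝ) ≤ la := hla0
    have habs : ‖lam‖ = la := by
      rw [hla, Complex.norm_real, Real.norm_eq_abs, abs_of_nonneg hla0']
    refine ⟨by rw [hla]; simp, ?_, ?_⟩
    · rw [hla, Complex.ofReal_re]
      calc δ ≤ ε := min_le_left _ _
        _ ≤ la := by rw [← habs]; exact hout
    · rw [hla, Complex.ofReal_re, ← habs]
      exact hnorm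
  set w : A := (c : ℂ) • (1 : A) - x with hw
  have hwmem : ∀ μ ∈ spectrum ℂ w, ‖μ‖ ≤ c - δ := by
    intro μ hμ
    have hmem : (c : ℂ) - μ ∈ spectrum ℂ x := by
      rw [spectrum.mem_iff] at hμ ⊢
      intro hunit
      apply hμ
      have key : (algebraMap ℂ A) μ - w = -((algebraMap ℂ A) ((c:ℂ) - μ) - x) := by
        rw [hw]
        simp only [Algebra.algebraMap_eq_smul_one, sub_smul]
        abel
      rw [key]
      exact hunit.neg
    obtain ⟨him, hlo, hhi⟩ := hspec _ hmem
    have hμeq : μ = ((c - ((c:ℂ) - μ).re : ℝ) : ℂ) := by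
      have hν : ((((c:ℂ) - μ).re : ℝ) : ℂ) = (c:ℂ) - μ := Complex.ext rfl (by simp [him])
      push_cast
      rw [hν]
      ring
    rw [hμeq, Complex.norm_real, Real.norm_eq_abs, abs_of_nonneg (by linarith)]
    linarith
  set ρ : ℝ := c - δ/2 with hρ
  have hρpos : 0 < ρ := by rw [hρ]; linarith
  set r : NNReal := Real.toNNReal ρ with hr
  have hρr : (r : ℝ) = ρ := Real.coe_toNNReal _ hρpos.le
  have hsr : spectralRadius ℂ w < (r : ENNReal) := by
    apply spectrum.spectralRadius_lt_of_forall_lt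
    intro z hz
    have h1 : ‖z‖ ≤ c - δ := hwmem z hz
    have h2 : ‖z‖ < ρ := by rw [hρ]; linarith
    rw [← norm_toNNReal, hr]
    exact Real.toNNReal_lt_toNNReal_iff_of_nonneg (norm_nonneg _) |>.mpr h2
  have hgel := spectrum.pow_nnnorm_pow_one_div_tendsto_nhds_spectralRadius w
  have hev : ∀ᶠ n : ℕ in atTop, (‖w ^ n‖₊ : ENNReal) ^ (1 / (n:ℝ)) < (r : ENNReal) :=
    hgel.eventually_lt_const hsr
  obtain ⟨N₀, hN₀⟩ := eventually_atTop.mp hev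
  have hpow_bound : ∀ n : ℕ, N₀ ≤ n → 1 ≤ n → ‖w ^ n‖ ≤ ρ ^ n := by
    intro n hn hn1
    have h1 := hN₀ n hn
    have hn0 : (n : ℝ) ≠ 0 := by positivity
    have h2 : ((‖w ^ n‖₊ : ENNReal) ^ (1/(n:ℝ))) ^ (n:ℝ) ≤ ((r : ENNReal)) ^ (n:ℝ) :=
      ENNReal.rpow_le_rpow h1.le (by positivity)
    rw [← ENNReal.rpow_mul, one_div, inv_mul_cancel₀ hn0, ENNReal.rpow_one] at h2
    rw [ENNReal.rpow_natCast, ← ENNReal.coe_pow, ENNReal.coe_le_coe] at h2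
    calc ‖w ^ n‖ = ((‖w ^ n‖₊ : NNReal) : ℝ) := (coe_nnnorm _).symm
      _ ≤ ((r ^ n : NNReal) : ℝ) := NNReal.coe_le_coe.mpr h2
      _ = ρ ^ n := by rw [NNReal.coe_pow, hρr]
  set N₁ := max N₀ 1 with hN₁
  set C : ℝ := 1 + ∑ n ∈ Finset.range N₁, ‖w ^ n‖ / ρ ^ n with hC
  have hC1 : (1:ℝ) ≤ C :=
    le_add_of_nonneg_right (Finset.sum_nonneg fun i _ => by positivity)
  have hkey : ∀ n : ℕ, ‖w ^ n‖ ≤ C * ρ ^ n := by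
    intro n
    rcases lt_or_ge n N₁ with hlt | hge
    · have hmem : n ∈ Finset.range N₁ := Finset.mem_range.mpr hlt
      have h1 : ‖w ^ n‖ / ρ ^ n ≤ C := by
        have h2 : ‖w ^ n‖ / ρ ^ n ≤ ∑ i ∈ Finset.range N₁, ‖w ^ i‖ / ρ ^ i :=
          Finset.single_le_sum (f := fun i => ‖w ^ i‖ / ρ ^ i)
            (fun i _ => by positivity) hmem
        rw [hC]
        linarith
      calc ‖w ^ n‖ = (‖w ^ n‖ / ρ ^ n) * ρ ^ n := by field_simp
        _ ≤ C * ρ ^ n := mul_le_mul_of_nonneg_right h1 (by positivity)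
    · have h2 := hpow_bound n (le_trans (le_max_left _ _) hge) (le_trans (le_max_right _ _) hge)
      calc ‖w ^ n‖ ≤ ρ ^ n := h2
        _ ≤ C * ρ ^ n := le_mul_of_one_le_left (by positivity) hC1
  have hexp_bound : ∀ N : ℕ,
      ‖(NormedSpace.exp (-x)) ^ N‖ ≤ (C * ‖(1:A)‖) * Real.exp (-(δ/2) * N) := by
    intro N
    have hsplit : (N : ℂ) • (-x) = (N : ℂ) • w + ((-((N:ℝ) * c) : ℝ) : ℂ) • (1 : A) := by
      rw [hw]
      push_cast
      module
    have hcomm : Commute ((N : ℂ) • w) (((-((N:ℝ) * c) : ℝ) : ℂ) • (1 : A)) :=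
      ((Commute.one_right w).smul_left _).smul_right _
    have hXN : (NormedSpace.exp (-x)) ^ N
        = NormedSpace.exp ((N:ℂ) • w) * (Complex.exp ((-((N:ℝ) * c) : ℝ) : ℂ) • (1:A)) := by
      let +nondep : NormedAlgebra ℚ A := .restrictScalars ℚ ℂ A
      rw [← NormedSpace.exp_nsmul, ← Nat.cast_smul_eq_nsmul ℂ, hsplit,
        NormedSpace.exp_add_of_commute hcomm, exp_smul_one]
    rw [hXN]
    have h1 : ‖NormedSpace.exp ((N:ℂ) • w)‖ ≤ C * Real.exp (N * ρ) := by
      rw [NormedSpace.exp_eq_tsum ℂ]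
      show ‖∑' n : ℕ, (n.factorial : ℂ)⁻¹ • ((N:ℂ) • w) ^ n‖ ≤ _
      have hsumw := NormedSpace.norm_expSeries_summable' (𝕂 := ℂ) ((N:ℂ) • w)
      refine le_trans (norm_tsum_le_tsum_norm hsumw) ?_
      have hsumr : Summable (fun n : ℕ => C * (((N:ℝ) * ρ) ^ n / n.factorial)) :=
        (Real.summable_pow_div_factorial ((N:ℝ) * ρ)).mul_left C
      have hterm : ∀ n : ℕ, ‖(n.factorial : ℂ)⁻¹ • ((N:ℂ) • w) ^ n‖
          ≤ C * (((N:ℝ) * ρ) ^ n / n.factorial) := by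
        intro n
        rw [smul_pow, smul_smul, norm_smul, norm_mul, norm_inv, norm_pow]
        have e1 : ‖((n.factorial : ℕ) : ℂ)‖ = (n.factorial : ℝ) := by
          rw [Complex.norm_natCast]
        have e2 : ‖((N : ℕ) : ℂ)‖ = (N : ℝ) := by rw [Complex.norm_natCast]
        rw [e1, e2]
        calc (n.factorial : ℝ)⁻¹ * (N:ℝ) ^ n * ‖w ^ n‖
            ≤ (n.factorial : ℝ)⁻¹ * (N:ℝ) ^ n * (C * ρ ^ n) := by
              apply mul_le_mul_of_nonneg_left (hkey n) (by positivity)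
          _ = C * (((N:ℝ) * ρ) ^ n / n.factorial) := by
              rw [mul_pow]; ring
      refine le_trans (Summable.tsum_le_tsum hterm hsumw hsumr) ?_
      rw [tsum_mul_left]
      apply le_of_eq
      congr 1
      rw [Real.exp_eq_exp_ℝ, NormedSpace.exp_eq_tsum_div]
    have h2 : ‖Complex.exp ((-((N:ℝ) * c) : ℝ) : ℂ) • (1:A)‖
        = Real.exp (-((N:ℝ) * c)) * ‖(1:A)‖ := by
      rw [norm_smul]
      congr 1
      rw [Complex.norm_exp]
      simp
    have hfinal : Real.exp ((N:ℝ) * ρ) * Real.exp (-((N:ℝ) * c)) = Real.exp (-(δ/2) * N) := by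
      rw [← Real.exp_add]
      congr 1
      rw [hρ]
      ring
    calc ‖NormedSpace.exp ((N:ℂ) • w) * (Complex.exp ((-((N:ℝ) * c) : ℝ) : ℂ) • (1:A))‖
        ≤ ‖NormedSpace.exp ((N:ℂ) • w)‖ * ‖Complex.exp ((-((N:ℝ) * c) : ℝ) : ℂ) • (1:A)‖ :=
          norm_mul_le _ _
      _ ≤ (C * Real.exp ((N:ℝ) * ρ)) * (Real.exp (-((N:ℝ) * c)) * ‖(1:A)‖) := by
          rw [h2]
          apply mul_le_mul_of_nonneg_right h1 (by positivity)
      _ = (C * ‖(1:A)‖) * (Real.exp ((N:ℝ) * ρ) * Real.exp (-((N:ℝ) * c))) := by ring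
      _ = (C * ‖(1:A)‖) * Real.exp (-(δ/2) * N) := by rw [hfinal]
  have hlim : Tendsto (fun N : ℕ => (C * ‖(1:A)‖) * Real.exp (-(δ/2) * N)) atTop (𝓝 0) := by
    have heq : ∀ N : ℕ, Real.exp (-(δ/2) * N) = (Real.exp (-(δ/2))) ^ N := by
      intro N
      rw [← Real.exp_nat_mul]
      congr 1
      ring
    simp_rw [heq]
    have hlt1 : Real.exp (-(δ/2)) < 1 := by
      rw [Real.exp_lt_one_iff]
      linarith
    have h3 := tendsto_pow_atTop_nhds_zero_of_lt_one (Real.exp_pos _).le hlt1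
    simpa using h3.const_mul (C * ‖(1:A)‖)
  exact squeeze_zero (fun N => norm_nonneg _) hexp_bound hlim



lemma sqrt_unique [Nontrivial A] {s s' : A} (hs : IsUnit s) (hs' : IsUnit s')
    (h1 : spectrum ℂ s ⊆ Complex.ofReal '' Set.Ici 0)
    (h2 : spectrum ℂ s' ⊆ Complex.ofReal '' Set.Ici 0)
    (hsq : s * s = s' * s') : s = s' := by
  set t : A := s' * s - s * s' with ht
  have he1 : s * s * s' = s' * s * s := by
    calc s * s * s' = s' * s' * s' := by rw [hsq]
      _ = s' * (s' * s') := by rw [mul_assoc]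
      _ = s' * (s * s) := by rw [← hsq]
      _ = s' * s * s := by rw [mul_assoc]
  have hanti : s * t = -(t * s) := by
    rw [ht]
    simp only [mul_sub, sub_mul, ← mul_assoc, neg_sub]
    rw [he1]
  have hneg : (-s) * t = t * s := by
    rw [neg_mul, hanti, neg_neg]
  have hpowt : ∀ n : ℕ, (-s) ^ n * t = t * s ^ n := by
    intro n
    induction n with
    | zero => simp
    | succ k ih =>
      rw [pow_succ', pow_succ', mul_assoc, ih, ← mul_assoc, hneg, mul_assoc]
  have hXt : NormedSpace.exp (-s) * t = t * NormedSpace.exp s := by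
    rw [NormedSpace.exp_eq_tsum ℂ]
    show (∑' n : ℕ, (n.factorial : ℂ)⁻¹ • (-s) ^ n) * t
        = t * ∑' n : ℕ, (n.factorial : ℂ)⁻¹ • s ^ n
    rw [← (NormedSpace.expSeries_summable' (𝕂 := ℂ) (-s)).tsum_mul_right t,
        ← (NormedSpace.expSeries_summable' (𝕂 := ℂ) s).tsum_mul_left t]
    congr 1
    ext n
    rw [smul_mul_assoc, hpowt n, mul_smul_comm]
  have hXtX : NormedSpace.exp (-s) * t * NormedSpace.exp (-s) = t := by
    let +nondep : NormedAlgebra ℚ A := .restrictScalars ℚ ℂ A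
    rw [hXt, mul_assoc, ← NormedSpace.exp_add_of_commute ((Commute.refl s).neg_right)]
    rw [add_neg_cancel, NormedSpace.exp_zero, mul_one]
  have hfix : ∀ N : ℕ, (NormedSpace.exp (-s)) ^ N * t * (NormedSpace.exp (-s)) ^ N = t := by
    intro N
    induction N with
    | zero => simp
    | succ k ih =>
      have hx : Commute (NormedSpace.exp (-s)) ((NormedSpace.exp (-s)) ^ k) :=
        (Commute.refl _).pow_right k
      rw [pow_succ]
      nth_rewrite 2 [← hx.eq]
      calc (NormedSpace.exp (-s)) ^ k * NormedSpace.exp (-s) * t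
            * (NormedSpace.exp (-s) * (NormedSpace.exp (-s)) ^ k)
          = (NormedSpace.exp (-s)) ^ k * (NormedSpace.exp (-s) * t
              * NormedSpace.exp (-s)) * (NormedSpace.exp (-s)) ^ k := by
            noncomm_ring
        _ = (NormedSpace.exp (-s)) ^ k * t * (NormedSpace.exp (-s)) ^ k := by rw [hXtX]
        _ = t := ih
  have hdecay := exp_neg_pow_tendsto h1 hs
  have ht0 : t = 0 := by
    have hb : ∀ N : ℕ, ‖t‖ ≤ ‖(NormedSpace.exp (-s)) ^ N‖ * ‖t‖
        * ‖(NormedSpace.exp (-s)) ^ N‖ := by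
      intro N
      conv_lhs => rw [← hfix N]
      calc ‖(NormedSpace.exp (-s)) ^ N * t * (NormedSpace.exp (-s)) ^ N‖
          ≤ ‖(NormedSpace.exp (-s)) ^ N * t‖ * ‖(NormedSpace.exp (-s)) ^ N‖ :=
            norm_mul_le _ _
        _ ≤ ‖(NormedSpace.exp (-s)) ^ N‖ * ‖t‖ * ‖(NormedSpace.exp (-s)) ^ N‖ :=
            mul_le_mul_of_nonneg_right (norm_mul_le _ _) (norm_nonneg _)
    have hlim : Tendsto (fun N : ℕ => ‖(NormedSpace.exp (-s)) ^ N‖ * ‖t‖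
        * ‖(NormedSpace.exp (-s)) ^ N‖) atTop (𝓝 0) := by
      have h4 := (hdecay.mul_const ‖t‖).mul hdecay
      simpa using h4
    have h5 : ‖t‖ ≤ 0 := ge_of_tendsto' hlim hb
    have h6 : ‖t‖ = 0 := le_antisymm h5 (norm_nonneg t)
    exact norm_eq_zero.mp h6
  have hcomm : Commute s s' := by
    have h7 : s' * s = s * s' := sub_eq_zero.mp ht0
    exact h7.symm
  set m : A := s + s' with hm
  have hum : IsUnit m := by
    obtain ⟨B, hB, hfac⟩ := exists_factor_exp_neg_sub_one m
    have hsplit : NormedSpace.exp (-m) = NormedSpace.exp (-s) * NormedSpace.exp (-s') := by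
      let +nondep : NormedAlgebra ℚ A := .restrictScalars ℚ ℂ A
      rw [hm, neg_add, NormedSpace.exp_add_of_commute (hcomm.neg_left.neg_right)]
    have hdecay' := exp_neg_pow_tendsto h2 hs'
    have hcommX : Commute (NormedSpace.exp (-s)) (NormedSpace.exp (-s')) :=
      (hcomm.neg_left.neg_right).exp
    have hYdecay : Tendsto (fun N : ℕ => ‖(NormedSpace.exp (-m)) ^ N‖) atTop (𝓝 0) := by
      apply squeeze_zero (g := fun N : ℕ => ‖(NormedSpace.exp (-s)) ^ N‖
        * ‖(NormedSpace.exp (-s')) ^ N‖) (fun N => norm_nonneg _)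
      · intro N
        rw [hsplit, hcommX.mul_pow]
        exact norm_mul_le _ _
      · simpa using hdecay.mul hdecay'
    obtain ⟨N, hN⟩ := (hYdecay.eventually_lt_const one_pos).exists
    have hgu : IsUnit (1 - (NormedSpace.exp (-m)) ^ N) :=
      (Units.oneSub ((NormedSpace.exp (-m)) ^ N) hN).isUnit
    set Y := NormedSpace.exp (-m) with hY
    set S := ∑ i ∈ Finset.range N, Y ^ i with hSdef
    have hS : Commute Y S := by
      rw [hSdef]
      exact Commute.sum_right _ _ _ fun i _ => (Commute.refl Y).pow_right i
    have hYS : Commute (1 - Y) S := (Commute.one_left S).sub_left hS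
    have hgeom : (1 - Y) * S = 1 - Y ^ N := by
      have hg := geom_sum_mul Y N
      calc (1 - Y) * S = -((Y - 1) * S) := by rw [← neg_sub, neg_mul]
        _ = -(S * (Y - 1)) := by rw [(hS.symm.sub_right (Commute.one_right S)).eq]
        _ = -(Y ^ N - 1) := by rw [hg]
        _ = 1 - Y ^ N := by rw [neg_sub]
    have hunit1Y : IsUnit (1 - Y) :=
      isUnit_of_commute_mul hYS (hgeom ▸ hgu)
    have hunitYm1 : IsUnit (Y - 1) := by
      have := hunit1Y.neg
      rwa [neg_sub] at this
    rw [hfac] at hunitYm1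
    exact isUnit_of_commute_mul hB hunitYm1
  have hzero : (s - s') * m = 0 := by
    rw [hm, sub_mul, mul_add, mul_add, hsq, hcomm.eq]
    abel
  obtain ⟨u, hu⟩ := hum
  have h8 : s - s' = 0 := by
    have h9 : (s - s') * (m * ↑u⁻¹) = 0 := by rw [← mul_assoc, hzero, zero_mul]
    rwa [← hu, u.mul_inv, mul_one] at h9
  exact sub_eq_zero.mp h8

lemma units_conj_pow (s : Aˣ) (Z : A) (n : ℕ) :
    ((s : A) * Z * (↑s⁻¹ : A)) ^ n = (s : A) * Z ^ n * (↑s⁻¹ : A) := by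
  induction n with
  | zero => simp [Units.mul_inv]
  | succ k ih =>
    rw [pow_succ, ih, pow_succ]
    calc ((s:A) * Z ^ k * ↑s⁻¹) * ((s:A) * Z * ↑s⁻¹)
        = (s:A) * (Z ^ k * (((↑s⁻¹ : A) * (s:A)) * Z)) * ↑s⁻¹ := by noncomm_ring
      _ = (s:A) * (Z ^ k * Z) * ↑s⁻¹ := by rw [Units.inv_mul, one_mul]

lemma exp_pi_idem {p : A} (hp : p * p = p) :
    NormedSpace.exp ((Complex.I * ((Real.pi : ℝ) : ℂ)) • p) = 1 - (2:ℂ) • p := by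
  rw [exp_idem hp, mul_comm Complex.I, Complex.exp_pi_mul_I]
  have h2 : ((-1 : ℂ) - 1) = -2 := by norm_num
  rw [h2, neg_smul, ← sub_eq_add_neg]

lemma exp_neg_pi_idem {p : A} (hp : p * p = p) :
    NormedSpace.exp ((Complex.I * (((-Real.pi) : ℝ) : ℂ)) • p) = 1 - (2:ℂ) • p := by
  rw [exp_idem hp]
  have h1 : Complex.I * (((-Real.pi) : ℝ) : ℂ) = -((Real.pi : ℂ) * Complex.I) := by
    push_cast
    ring
  rw [h1, Complex.exp_neg, Complex.exp_pi_mul_I]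
  have h2 : ((-1 : ℂ))⁻¹ - 1 = -2 := by norm_num
  rw [h2, neg_smul, ← sub_eq_add_neg]

lemma d_eq_zero (s : Aˣ) (d : A)
    (hbound : ∀ n : ℕ, 1 ≤ n → ‖(s : A) * (1 - (2 * n : ℂ) • d) * (↑s⁻¹ : A)‖ ≤ 1) :
    d = 0 := by
  set D : A := (s : A) * d * (↑s⁻¹ : A) with hD
  have hkey : ∀ n : ℕ, 1 ≤ n → (2 * n : ℝ) * ‖D‖ ≤ ‖(1:A)‖ + 1 := by
    intro n hn
    have h1 := hbound n hn
    have h2 : (s : A) * (1 - (2 * n : ℂ) • d) * (↑s⁻¹ : A) = 1 - (2 * n : ℂ) • D := by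
      rw [mul_sub, sub_mul, mul_one, Units.mul_inv, mul_smul_comm, smul_mul_assoc, hD]
    rw [h2] at h1
    have h3 : ‖(2 * n : ℂ) • D‖ = (2 * n : ℝ) * ‖D‖ := by
      rw [norm_smul]
      congr 1
      simp
    have h4 : (2 * n : ℝ) * ‖D‖ = ‖(1:A) - (1 - (2 * n : ℂ) • D)‖ := by
      rw [sub_sub_cancel, h3]
    rw [h4]
    calc ‖(1:A) - (1 - (2 * n:ℂ) • D)‖ ≤ ‖(1:A)‖ + ‖1 - (2 * n:ℂ) • D‖ := norm_sub_le _ _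
      _ ≤ ‖(1:A)‖ + 1 := by linarith
  have hD0 : ‖D‖ = 0 := by
    by_contra hne
    have hpos : 0 < ‖D‖ := lt_of_le_of_ne (norm_nonneg _) (Ne.symm hne)
    obtain ⟨n, hn⟩ := exists_nat_gt ((‖(1:A)‖ + 1) / (2 * ‖D‖))
    have hnum : 0 < ‖(1:A)‖ + 1 := by positivity
    have hn1 : 1 ≤ n := by
      rcases Nat.eq_zero_or_pos n with h | h
      · subst h
        have : (0:ℝ) < (‖(1:A)‖ + 1) / (2 * ‖D‖) := by positivity
        simp at hn
        linarith
      · exact h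
    have h6 : (‖(1:A)‖ + 1) / (2 * ‖D‖) < (n:ℝ) := hn
    rw [div_lt_iff₀ (by positivity)] at h6
    have h7 := hkey n hn1
    nlinarith
  have hDz : D = 0 := norm_eq_zero.mp hD0
  have h8 : (↑s⁻¹ : A) * D * (s : A) = d := by
    rw [hD]
    calc (↑s⁻¹ : A) * ((s:A) * d * (↑s⁻¹ : A)) * (s:A)
        = ((↑s⁻¹ : A) * (s:A)) * d * ((↑s⁻¹ : A) * (s:A)) := by noncomm_ring
      _ = d := by rw [Units.inv_mul, one_mul, mul_one]
  rw [← h8, hDz, mul_zero, zero_mul]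

lemma proj_core [Nontrivial A] {u p r d : A} (hp : p * p = p) (hr : r * r = r)
    (hdd : d * d = 0)
    (hprod : (1 - (2:ℂ) • p) * (1 - (2:ℂ) • r) = 1 - (2:ℂ) • d)
    (hep : IsHermitianWt u p) (her : IsHermitianWt u r) : d = 0 := by
  obtain ⟨s, hspos, hssq, hsnorm⟩ := hep
  obtain ⟨s', hs'pos, hs'sq, hs'norm⟩ := her
  have hval : (s' : A) = (s : A) := by
    apply sqrt_unique s'.isUnit s.isUnit hs'pos.2 hspos.2
    have e1 : (s' : A) * (s' : A) = ((s' : A)) ^ 2 := (sq _).symm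
    have e2 : (s : A) * (s : A) = ((s : A)) ^ 2 := (sq _).symm
    rw [e1, e2, hssq, hs'sq]
  have hsu : s = s' := Units.ext hval.symm
  subst hsu
  have hU := hsnorm Real.pi
  have hV := hs'norm (-Real.pi)
  rw [exp_pi_idem hp] at hU
  rw [exp_neg_pi_idem hr] at hV
  have hpown : ∀ n : ℕ, (1 - (2:ℂ) • d) ^ n = 1 - (2 * n : ℂ) • d := by
    intro n
    induction n with
    | zero => simp
    | succ k ih =>
      rw [pow_succ, ih]
      simp only [mul_sub, sub_mul, one_mul, mul_one, smul_mul_assoc, mul_smul_comm,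
        smul_smul, hdd, smul_zero]
      push_cast
      module
  have hmid : (s:A) * (1 - (2:ℂ) • p) * (↑s⁻¹ : A) * ((s:A) * (1 - (2:ℂ) • r) * (↑s⁻¹ : A))
      = (s:A) * (1 - (2:ℂ) • d) * (↑s⁻¹ : A) := by
    calc (s:A) * (1 - (2:ℂ) • p) * (↑s⁻¹ : A) * ((s:A) * (1 - (2:ℂ) • r) * (↑s⁻¹ : A))
        = (s:A) * ((1 - (2:ℂ) • p) * (((↑s⁻¹ : A) * (s:A)) * (1 - (2:ℂ) • r))) * (↑s⁻¹ : A) := by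
          noncomm_ring
      _ = (s:A) * ((1 - (2:ℂ) • p) * (1 - (2:ℂ) • r)) * (↑s⁻¹ : A) := by
          rw [Units.inv_mul, one_mul]
      _ = (s:A) * (1 - (2:ℂ) • d) * (↑s⁻¹ : A) := by rw [hprod]
  apply d_eq_zero s
  intro n hn
  have hconj : (s:A) * (1 - (2 * n : ℂ) • d) * (↑s⁻¹ : A)
      = ((s:A) * (1 - (2:ℂ) • p) * (↑s⁻¹ : A) * ((s:A) * (1 - (2:ℂ) • r) * (↑s⁻¹ : A))) ^ n := by
    rw [hmid, units_conj_pow, hpown n]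
  rw [hconj]
  have hmul : ‖(s:A) * (1 - (2:ℂ) • p) * (↑s⁻¹ : A) * ((s:A) * (1 - (2:ℂ) • r) * (↑s⁻¹ : A))‖
      ≤ 1 := by
    calc ‖(s:A) * (1 - (2:ℂ) • p) * (↑s⁻¹ : A) * ((s:A) * (1 - (2:ℂ) • r) * (↑s⁻¹ : A))‖
        ≤ ‖(s:A) * (1 - (2:ℂ) • p) * (↑s⁻¹ : A)‖ * ‖(s:A) * (1 - (2:ℂ) • r) * (↑s⁻¹ : A)‖ :=
          norm_mul_le _ _
      _ = 1 := by rw [hU, hV, one_mul]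
  calc ‖((s:A) * (1 - (2:ℂ) • p) * (↑s⁻¹ : A) * ((s:A) * (1 - (2:ℂ) • r) * (↑s⁻¹ : A))) ^ n‖
      ≤ ‖(s:A) * (1 - (2:ℂ) • p) * (↑s⁻¹ : A) * ((s:A) * (1 - (2:ℂ) • r) * (↑s⁻¹ : A))‖ ^ n :=
        norm_pow_le' _ hn
    _ ≤ 1 := pow_le_one₀ (norm_nonneg _) hmul

lemma proj_eq [Nontrivial A] {u p r : A} (hp : p * p = p) (hr : r * r = r)
    (h1 : p * r = r) (h2 : r * p = p)
    (hep : IsHermitianWt u p) (her : IsHermitianWt u r) : p = r := by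
  have hdd : (p - r) * (p - r) = 0 := by
    simp only [mul_sub, sub_mul, hp, hr, h1, h2]
    abel
  have hprod : (1 - (2:ℂ) • p) * (1 - (2:ℂ) • r) = 1 - (2:ℂ) • (p - r) := by
    simp only [mul_sub, sub_mul, one_mul, mul_one, smul_mul_assoc, mul_smul_comm,
      smul_smul, h1, smul_sub]
    module
  have := proj_core hp hr hdd hprod hep her
  exact sub_eq_zero.mp this

lemma proj_eq' [Nontrivial A] {u p r : A} (hp : p * p = p) (hr : r * r = r)
    (h1 : p * r = p) (h2 : r * p = r)
    (hep : IsHermitianWt u p) (her : IsHermitianWt u r) : p = r := by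
  have hdd : (r - p) * (r - p) = 0 := by
    simp only [mul_sub, sub_mul, hp, hr, h1, h2]
    abel
  have hprod : (1 - (2:ℂ) • p) * (1 - (2:ℂ) • r) = 1 - (2:ℂ) • (r - p) := by
    simp only [mul_sub, sub_mul, one_mul, mul_one, smul_mul_assoc, mul_smul_comm,
      smul_smul, h1, smul_sub]
    module
  have := proj_core hp hr hdd hprod hep her
  exact (sub_eq_zero.mp this).symm

end WEPaux

open WEPaux

/-- For `a = b c` as above, `a` is weighted EP with weights `e` and `h` iff
`b b^†_{e,f} = c^†_{f,h} c`, iff `b A = c^†_{f,h} A` and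
`{x : b^†_{e,f} x = 0} = {x : c x = 0}`. -/
theorem factorization_bc_weighted_EP_iff_range_ker
    {A : Type*} [NormedRing A] [NormedAlgebra ℂ A] [CompleteSpace A]
    (e f h a b c : A)
    (he : IsPositiveEl e ∧ IsUnit e) (hf : IsPositiveEl f ∧ IsUnit f)
    (hh : IsPositiveEl h ∧ IsUnit h)
    (ad : A) (had : IsWMPI e h a ad)
    (habc : a = b * c)
    (hb : ∀ x : A, b * x = 0 → x = 0) (hc : ∀ y : A, ∃ x : A, c * x = y)
    (bd : A) (hbd : IsWMPI e f b bd) (cd : A) (hcd : IsWMPI f h c cd) :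
    (IsWEP e h a ↔ b * bd = cd * c) ∧
    (IsWEP e h a ↔
      (Set.range (fun y : A => b * y) = Set.range (fun y : A => cd * y) ∧
        {x : A | bd * x = 0} = {x : A | c * x = 0})) := by
  rcases subsingleton_or_nontrivial A with hA | hA
  · constructor
    · constructor
      · intro _; exact Subsingleton.elim _ _
      · intro _; exact ⟨ad, had, Subsingleton.elim _ _⟩
    · constructor
      · intro _
        constructor
        · apply Set.ext; intro x
          constructor
          · intro _; exact ⟨x, Subsingleton.elim _ _⟩
          · intro _; exact ⟨x, Subsingleton.elim _ _⟩
        · apply Set.ext; intro x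
          simp only [Set.mem_setOf_eq]
          constructor
          · intro _; exact Subsingleton.elim _ _
          · intro _; exact Subsingleton.elim _ _
      · intro _; exact ⟨ad, had, Subsingleton.elim _ _⟩
  · have hbdb : bd * b = 1 := by
      have h0 : b * (bd * b - 1) = 0 := by
        calc b * (bd * b - 1) = b * bd * b - b := by noncomm_ring
          _ = 0 := by rw [hbd.1, sub_self]
      exact sub_eq_zero.mp (hb _ h0)
    have hccd : c * cd = 1 := by
      obtain ⟨x₀, hx₀⟩ := hc 1
      calc c * cd = c * cd * (c * x₀) := by rw [hx₀, mul_one]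
        _ = (c * cd * c) * x₀ := by noncomm_ring
        _ = c * x₀ := by rw [hcd.1]
        _ = 1 := hx₀
    have hbcancel : ∀ x y : A, b * x = b * y → x = y := by
      intro x y hxy
      have h0 : b * (x - y) = 0 := by rw [mul_sub, hxy, sub_self]
      exact sub_eq_zero.mp (hb _ h0)
    have hccancel : ∀ x y : A, x * c = y * c → x = y := by
      intro x y hxy
      calc x = x * (c * cd) := by rw [hccd, mul_one]
        _ = (x * c) * cd := by rw [mul_assoc]
        _ = (y * c) * cd := by rw [hxy]
        _ = y * (c * cd) := by rw [mul_assoc]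
        _ = y := by rw [hccd, mul_one]
    have haG : a * (cd * bd) = b * bd := by
      calc a * (cd * bd) = b * (c * cd) * bd := by rw [habc]; noncomm_ring
        _ = b * bd := by rw [hccd, mul_one]
    have hGa : (cd * bd) * a = cd * c := by
      calc (cd * bd) * a = cd * (bd * b) * c := by rw [habc]; noncomm_ring
        _ = cd * c := by rw [hbdb, mul_one]
    have hG : IsWMPI e h a (cd * bd) := by
      refine ⟨?_, ?_, ?_, ?_⟩
      · calc a * (cd * bd) * a = (b * bd) * a := by rw [haG]
          _ = b * (bd * b) * c := by rw [habc]; noncomm_ring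
          _ = b * c := by rw [hbdb, mul_one]
          _ = a := habc.symm
      · calc (cd * bd) * a * (cd * bd) = (cd * c) * (cd * bd) := by rw [hGa]
          _ = cd * (c * cd) * bd := by noncomm_ring
          _ = cd * bd := by rw [hccd, mul_one]
      · rw [haG]; exact hbd.2.2.1
      · rw [hGa]; exact hcd.2.2.2
    have hPQ_of_WEP : IsWEP e h a → b * bd = cd * c := by
      rintro ⟨g, hg, hcm⟩
      have hagb : a * g * b = b := by
        apply hccancel
        calc (a * g * b) * c = a * g * (b * c) := by rw [mul_assoc]
          _ = a * g * a := by rw [← habc]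
          _ = a := hg.1
          _ = b * c := habc
      have hcgb : c * g * b = 1 := by
        have e3 : b * ((c * g * b) * c) = b * (1 * c) := by
          calc b * ((c * g * b) * c) = (b * c) * g * (b * c) := by noncomm_ring
            _ = a * g * a := by rw [← habc]
            _ = a := hg.1
            _ = b * c := habc
            _ = b * (1 * c) := by rw [one_mul]
        exact hccancel _ _ (hbcancel _ _ e3)
      have hPP : (b * bd) * (b * bd) = b * bd := by
        calc (b * bd) * (b * bd) = b * bd * b * bd := by noncomm_ring
          _ = b * bd := by rw [hbd.1]
      have hRR : (a * g) * (a * g) = a * g := by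
        calc (a * g) * (a * g) = (a * g * a) * g := by noncomm_ring
          _ = a * g := by rw [hg.1]
      have hQQ : (cd * c) * (cd * c) = cd * c := by
        calc (cd * c) * (cd * c) = cd * (c * cd) * c := by noncomm_ring
          _ = cd * c := by rw [hccd, mul_one]
      have hPR : (b * bd) * (a * g) = a * g := by
        calc (b * bd) * (a * g) = ((b * bd * b) * c) * g := by rw [habc]; noncomm_ring
          _ = (b * c) * g := by rw [hbd.1]
          _ = a * g := by rw [← habc]
      have hRP : (a * g) * (b * bd) = b * bd := by
        calc (a * g) * (b * bd) = (a * g * b) * bd := by noncomm_ring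
          _ = b * bd := by rw [hagb]
      have hQR : (cd * c) * (a * g) = cd * c := by
        have e5 : c * (a * g) = c := by
          calc c * (a * g) = c * (g * a) := by rw [hcm]
            _ = (c * g * b) * c := by rw [habc]; noncomm_ring
            _ = c := by rw [hcgb, one_mul]
        calc (cd * c) * (a * g) = cd * (c * (a * g)) := by rw [mul_assoc]
          _ = cd * c := by rw [e5]
      have hRQ : (a * g) * (cd * c) = a * g := by
        have e6 : a * (cd * c) = a := by
          calc a * (cd * c) = b * (c * cd) * c := by rw [habc]; noncomm_ring
            _ = b * c := by rw [hccd, mul_one]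
            _ = a := habc.symm
        calc (a * g) * (cd * c) = (g * a) * (cd * c) := by rw [hcm]
          _ = g * (a * (cd * c)) := by rw [mul_assoc]
          _ = g * a := by rw [e6]
          _ = a * g := hcm.symm
      have hermR' : IsHermitianWt h (a * g) := by
        have h9 := hg.2.2.2
        rwa [← hcm] at h9
      have hPReq : (b * bd) = (a * g) := proj_eq hPP hRR hPR hRP hbd.2.2.1 hg.2.2.1
      have hQReq : (cd * c) = (a * g) := proj_eq' hQQ hRR hQR hRQ hcd.2.2.2 hermR'
      rw [hPReq, hQReq]
    have hWEP_of_PQ : b * bd = cd * c → IsWEP e h a := by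
      intro hPQ
      exact ⟨cd * bd, hG, by rw [haG, hGa, hPQ]⟩
    have hiff2 : b * bd = cd * c ↔
        (Set.range (fun y : A => b * y) = Set.range (fun y : A => cd * y) ∧
          {x : A | bd * x = 0} = {x : A | c * x = 0}) := by
      constructor
      · intro hPQ
        constructor
        · apply Set.ext; intro x
          simp only [Set.mem_range]
          constructor
          · rintro ⟨y, rfl⟩
            refine ⟨c * (b * y), ?_⟩
            calc cd * (c * (b * y)) = (cd * c) * (b * y) := by rw [mul_assoc]
              _ = (b * bd) * (b * y) := by rw [hPQ]
              _ = b * ((bd * b) * y) := by noncomm_ring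
              _ = b * y := by rw [hbdb, one_mul]
          · rintro ⟨y, rfl⟩
            refine ⟨bd * (cd * y), ?_⟩
            calc b * (bd * (cd * y)) = (b * bd) * (cd * y) := by rw [← mul_assoc]
              _ = (cd * c) * (cd * y) := by rw [hPQ]
              _ = cd * ((c * cd) * y) := by noncomm_ring
              _ = cd * y := by rw [hccd, one_mul]
        · apply Set.ext; intro x
          simp only [Set.mem_setOf_eq]
          constructor
          · intro hx
            calc c * x = (c * cd) * (c * x) := by rw [hccd, one_mul]
              _ = c * ((cd * c) * x) := by noncomm_ring
              _ = c * ((b * bd) * x) := by rw [hPQ]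
              _ = (c * b) * (bd * x) := by noncomm_ring
              _ = 0 := by rw [hx, mul_zero]
          · intro hx
            calc bd * x = (bd * b) * (bd * x) := by rw [hbdb, one_mul]
              _ = bd * ((b * bd) * x) := by noncomm_ring
              _ = bd * ((cd * c) * x) := by rw [hPQ]
              _ = (bd * cd) * (c * x) := by noncomm_ring
              _ = 0 := by rw [hx, mul_zero]
      · rintro ⟨hrange, hker⟩
        have hPmem : b * bd ∈ Set.range (fun y : A => cd * y) := by
          rw [← hrange]
          exact ⟨bd, rfl⟩
        obtain ⟨w, hw⟩ := hPmem
        have hQP : (cd * c) * (b * bd) = b * bd := by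
          rw [← hw]
          calc (cd * c) * (cd * w) = cd * ((c * cd) * w) := by noncomm_ring
            _ = cd * w := by rw [hccd, one_mul]
        have hkerP : bd * (1 - b * bd) = 0 := by
          calc bd * (1 - b * bd) = bd - (bd * b) * bd := by noncomm_ring
            _ = 0 := by rw [hbdb, one_mul, sub_self]
        have hcmem : c * (1 - b * bd) = 0 := by
          have h10 : (1 - b * bd) ∈ {x : A | bd * x = 0} := hkerP
          rw [hker] at h10
          exact h10
        have hcP : c * (b * bd) = c := by
          have e7 : c - c * (b * bd) = 0 := by
            calc c - c * (b * bd) = c * (1 - b * bd) := by noncomm_ring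
              _ = 0 := hcmem
          exact (sub_eq_zero.mp e7).symm
        calc b * bd = (cd * c) * (b * bd) := hQP.symm
          _ = cd * (c * (b * bd)) := by rw [mul_assoc]
          _ = cd * c := by rw [hcP]
    exact ⟨⟨hPQ_of_WEP, hWEP_of_PQ⟩,
      ⟨fun hwep => hiff2.mp (hPQ_of_WEP hwep), fun hr => hWEP_of_PQ (hiff2.mpr hr)⟩⟩
end
end
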